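/- arXiv:2011.03655 — 7 statements merged into one kernel-verified Lean document; each statement's English description precedes it below -/
import Mathlib

section
/- Consider the Bernoulli model: X = {0,1}, Θ = [0,1], ν counting measure on X, and q(θ,x) = θ^x (1−θ)^{1−x}. Fix α ∈ (0, 0.2) and ε ∈ (0,α). Then there exist a product-measurable (in (θ,x), for each prior) acceptance probability function ψ : P([0,1]) × [0,1] × {0,1} → [0,1] and a prior π₀ ∈ P([0,1]) such that: (a) for every π ∈ P([0,1]) and P_π-almost every x, ∫ ψ(π,θ,x) Post(π,x)(dθ) = 1 − α; (b) ∫_X (1 − ψ(π₀,θ,x)) P_θ(dx) ≤ α for every θ ∈ [0,1], where P_θ is the Bernoulli(θ) distribution; and (c) for every π and x, the support of θ ↦ ψ(π,θ,x) is contained in the ε-fattening of the 1−(α−ε) credible ball of Post(π,x), and the 1−α credible ball of Post(π,x) is contained in the ε-fattening of the support of θ ↦ ψ(π,θ,x). -/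
open MeasureTheory

/-- The Bernoulli parameter space `[0,1]`. -/
abbrev BernΘ : Set ℝ := Set.Icc (0:ℝ) 1

/-- The Bernoulli conditional density `q(θ,x) = θ^x (1-θ)^{1-x}` w.r.t. counting measure
on `{0,1}` (encoded as `Bool`). -/
noncomputable def bq (θ : ↥BernΘ) (x : Bool) : ℝ := if x then (θ : ℝ) else 1 - (θ : ℝ)

/-- The Bernoulli(θ) distribution on `{0,1}`: density `bq θ` w.r.t. counting measure. -/
noncomputable def bP (θ : ↥BernΘ) : Measure Bool :=
  Measure.count.withDensity fun x => ENNReal.ofReal (bq θ x)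

/-- The Bernoulli posterior of prior `π` given observation `x`. -/
noncomputable def bPost (π : ProbabilityMeasure ↥BernΘ) (x : Bool) : Measure ↥BernΘ :=
  (∫⁻ θ, ENNReal.ofReal (bq θ x) ∂(π : Measure ↥BernΘ))⁻¹ •
    (π : Measure ↥BernΘ).withDensity fun θ => ENNReal.ofReal (bq θ x)

/-- The mean `M(μ)` of a measure on `[0,1]`. -/
noncomputable def bMean (μ : Measure ↥BernΘ) : ℝ := ∫ θ, (θ : ℝ) ∂μ

/-- The radius `L_α(μ)` of the `1-α` credible ball of `μ`. -/
noncomputable def bBallLevel (μ : Measure ↥BernΘ) (α : ℝ) : ℝ :=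
  sInf {r : ℝ | 0 < r ∧ 1 - α ≤ (μ {θ : ↥BernΘ | |(θ : ℝ) - bMean μ| ≤ r}).toReal}

/-- The `1-α` credible ball of `μ`. -/
noncomputable def bCredBall (μ : Measure ↥BernΘ) (α : ℝ) : Set ↥BernΘ :=
  {θ : ↥BernΘ | |(θ : ℝ) - bMean μ| ≤ bBallLevel μ α}

-- auxiliary development
namespace BernAux

open Measure ENNReal Set
open scoped Classical

noncomputable section

abbrev Θ' := ↥BernΘ

lemma val_mem (θ : Θ') : (0:ℝ) ≤ θ.val ∧ θ.val ≤ 1 := ⟨θ.2.1, θ.2.2⟩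

/-- `bP θ` as a two-atom measure. -/
lemma bP_eq (θ : Θ') :
    bP θ = ENNReal.ofReal (1 - θ.val) • Measure.dirac false
      + ENNReal.ofReal θ.val • Measure.dirac true := by
  ext s hs
  rw [bP, withDensity_apply _ hs, ← lintegral_indicator hs, lintegral_count,
    tsum_bool, Measure.add_apply, Measure.smul_apply, Measure.smul_apply,
    Measure.dirac_apply' _ hs, Measure.dirac_apply' _ hs]
  by_cases hf : false ∈ s <;> by_cases ht : true ∈ s <;>
    simp [hf, ht, Set.indicator_apply, bq, smul_eq_mul]

lemma measurable_bP : Measurable bP := by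
  apply Measure.measurable_of_measurable_coe
  intro s hs
  simp_rw [bP_eq, Measure.add_apply, Measure.smul_apply, smul_eq_mul]
  exact ((ENNReal.measurable_ofReal.comp
      (measurable_const.sub measurable_subtype_coe)).mul measurable_const).add
    ((ENNReal.measurable_ofReal.comp measurable_subtype_coe).mul measurable_const)

/-- Integrability for `c • dirac`. -/
lemma integrable_smul_dirac {X : Type*} [MeasurableSpace X] [MeasurableSingletonClass X]
    (u : X) (a : ℝ) {g : X → ℝ} (hg : Measurable g) :
    Integrable g (ENNReal.ofReal a • Measure.dirac u) := by
  refine ⟨hg.aestronglyMeasurable, ?_⟩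
  show (∫⁻ x, (‖g x‖₊ : ℝ≥0∞) ∂(ENNReal.ofReal a • Measure.dirac u)) < ⊤
  rw [lintegral_smul_measure, lintegral_dirac]
  exact ENNReal.mul_lt_top ofReal_lt_top coe_lt_top

lemma integral_two_atom {X : Type*} [MeasurableSpace X] [MeasurableSingletonClass X]
    (u v : X) {a b : ℝ} (ha : 0 ≤ a) (hb : 0 ≤ b) {g : X → ℝ} (hg : Measurable g) :
    ∫ x, g x ∂(ENNReal.ofReal a • Measure.dirac u + ENNReal.ofReal b • Measure.dirac v)
      = a * g u + b * g v := by
  rw [integral_add_measure (integrable_smul_dirac u a hg) (integrable_smul_dirac v b hg),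
    integral_smul_measure, integral_smul_measure, integral_dirac, integral_dirac,
    ENNReal.toReal_ofReal ha, ENNReal.toReal_ofReal hb]
  simp [smul_eq_mul]

lemma two_atom_apply_toReal {X : Type*} [MeasurableSpace X]
    (u v : X) {a b : ℝ} (ha : 0 ≤ a) (hb : 0 ≤ b) {s : Set X} (hs : MeasurableSet s) :
    (((ENNReal.ofReal a • Measure.dirac u + ENNReal.ofReal b • Measure.dirac v)) s).toReal
      = (if u ∈ s then a else 0) + (if v ∈ s then b else 0) := by
  classical
  rw [Measure.add_apply, Measure.smul_apply, Measure.smul_apply,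
    Measure.dirac_apply' _ hs, Measure.dirac_apply' _ hs]
  by_cases hu : u ∈ s <;> by_cases hv : v ∈ s <;>
    simp [hu, hv, Set.indicator_apply, smul_eq_mul, ENNReal.toReal_add,
      ENNReal.toReal_ofReal, ha, hb]

lemma withDensity_dirac {X : Type*} [MeasurableSpace X] (u : X) {h : X → ℝ≥0∞}
    (hh : Measurable h) : (Measure.dirac u).withDensity h = h u • Measure.dirac u := by
  ext s hs
  rw [withDensity_apply _ hs, setLIntegral_dirac' hh hs, Measure.smul_apply,
    Measure.dirac_apply' _ hs]
  by_cases hu : u ∈ s <;> simp [hu, Set.indicator_apply, smul_eq_mul]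

end
end BernAux
namespace BernAux
noncomputable section
open Measure ENNReal Set
open scoped Classical

variable (α ε : ℝ)

/-- the weight of the extreme atoms of the matching prior -/
def W : ℝ := (2*α - ε)/4

def z0 : Θ' := ⟨0, by constructor <;> norm_num⟩
def zh : Θ' := ⟨1/2, by constructor <;> norm_num⟩
def z1 : Θ' := ⟨1, by constructor <;> norm_num⟩

/-- the matching prior -/
def μ₀ : Measure Θ' :=
  ENNReal.ofReal (W α ε) • Measure.dirac z0 + ENNReal.ofReal (1 - 2*W α ε) • Measure.dirac zh
    + ENNReal.ofReal (W α ε) • Measure.dirac z1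

/-- the posterior of `μ₀` given `x = true` -/
def Q1 : Measure Θ' :=
  ENNReal.ofReal (1 - 2*W α ε) • Measure.dirac zh + ENNReal.ofReal (2*W α ε) • Measure.dirac z1

/-- the posterior of `μ₀` given `x = false` -/
def Q0 : Measure Θ' :=
  ENNReal.ofReal (1 - 2*W α ε) • Measure.dirac zh + ENNReal.ofReal (2*W α ε) • Measure.dirac z0

section numeric
variable {α ε : ℝ} (hα : α ∈ Set.Ioo (0:ℝ) 0.2) (hε : ε ∈ Set.Ioo 0 α)

include hα hε

lemma W_pos : 0 < W α ε := by
  obtain ⟨hα0, hα2⟩ := hα; obtain ⟨hε0, hεα⟩ := hε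
  unfold W; linarith

lemma W_facts : 2 * W α ε < α ∧ α - ε < 2 * W α ε ∧ W α ε ≤ 1/4 ∧ 0 ≤ 1 - 2*W α ε := by
  obtain ⟨hα0, hα2⟩ := hα; obtain ⟨hε0, hεα⟩ := hε
  have h2 : (0.2:ℝ) = 1/5 := by norm_num
  unfold W; refine ⟨by linarith, by linarith, by nlinarith, by nlinarith⟩

lemma isProb_μ₀ : IsProbabilityMeasure (μ₀ α ε) := by
  have hw0 := (W_pos hα hε).le
  have hw1 := (W_facts hα hε).2.2.2
  constructor
  rw [μ₀]
  simp only [Measure.add_apply, Measure.smul_apply, measure_univ, smul_eq_mul, mul_one]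
  rw [← ENNReal.ofReal_add hw0 hw1, ← ENNReal.ofReal_add (by linarith) hw0,
    show W α ε + (1 - 2*W α ε) + W α ε = 1 by ring, ENNReal.ofReal_one]

lemma post_true (π : ProbabilityMeasure Θ') (hπ : (π : Measure Θ') = μ₀ α ε) :
    bPost π true = Q1 α ε := by
  have hw0 := (W_pos hα hε).le
  have hw1 := (W_facts hα hε).2.2.2
  have hmeas : Measurable (fun θ : Θ' => ENNReal.ofReal (bq θ true)) := by
    simp only [bq, if_true]
    exact ENNReal.measurable_ofReal.comp measurable_subtype_coe
  have hWD : (μ₀ α ε).withDensity (fun θ => ENNReal.ofReal (bq θ true))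
      = ENNReal.ofReal ((1 - 2*W α ε)/2) • Measure.dirac zh
        + ENNReal.ofReal (W α ε) • Measure.dirac z1 := by
    rw [μ₀, withDensity_add_measure, withDensity_add_measure,
      withDensity_smul_measure, withDensity_smul_measure, withDensity_smul_measure,
      withDensity_dirac _ hmeas, withDensity_dirac _ hmeas, withDensity_dirac _ hmeas]
    have h0 : ENNReal.ofReal (bq z0 true) = 0 := by simp [bq, z0]
    have hh : ENNReal.ofReal (bq zh true) = ENNReal.ofReal (1/2) := by simp [bq, zh]
    have h1 : ENNReal.ofReal (bq z1 true) = 1 := by simp [bq, z1]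
    rw [h0, hh, h1, zero_smul, smul_zero, zero_add, one_smul, smul_smul,
      ← ENNReal.ofReal_mul hw1, show (1 - 2*W α ε) * (1/2) = (1 - 2*W α ε)/2 from by ring]
  have hZ : (∫⁻ θ, ENNReal.ofReal (bq θ true) ∂(μ₀ α ε)) = ENNReal.ofReal (1/2) := by
    have h := congrArg (fun m : Measure Θ' => m Set.univ) hWD
    simp only [withDensity_apply _ MeasurableSet.univ, Measure.restrict_univ,
      Measure.add_apply, Measure.smul_apply, measure_univ, smul_eq_mul, mul_one] at h
    rw [h, ← ENNReal.ofReal_add (by linarith) hw0,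
      show (1 - 2*W α ε)/2 + W α ε = 1/2 from by ring]
  have hinv : (ENNReal.ofReal ((1:ℝ)/2))⁻¹ = 2 := by
    rw [show (1/2:ℝ) = 2⁻¹ from by norm_num, ENNReal.ofReal_inv_of_pos (by norm_num)]
    norm_num
  rw [bPost, hπ, hWD, hZ, hinv, smul_add, smul_smul, smul_smul,
    show (2:ℝ≥0∞) = ENNReal.ofReal 2 from by norm_num,
    ← ENNReal.ofReal_mul (by norm_num), ← ENNReal.ofReal_mul (by norm_num),
    show 2 * ((1 - 2*W α ε)/2) = 1 - 2*W α ε from by ring, Q1]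

lemma post_false (π : ProbabilityMeasure Θ') (hπ : (π : Measure Θ') = μ₀ α ε) :
    bPost π false = Q0 α ε := by
  have hw0 := (W_pos hα hε).le
  have hw1 := (W_facts hα hε).2.2.2
  have hmeas : Measurable (fun θ : Θ' => ENNReal.ofReal (bq θ false)) := by
    simp only [bq, if_false]
    exact ENNReal.measurable_ofReal.comp (measurable_const.sub measurable_subtype_coe)
  have hWD : (μ₀ α ε).withDensity (fun θ => ENNReal.ofReal (bq θ false))
      = ENNReal.ofReal (W α ε) • Measure.dirac z0
        + ENNReal.ofReal ((1 - 2*W α ε)/2) • Measure.dirac zh := by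
    rw [μ₀, withDensity_add_measure, withDensity_add_measure,
      withDensity_smul_measure, withDensity_smul_measure, withDensity_smul_measure,
      withDensity_dirac _ hmeas, withDensity_dirac _ hmeas, withDensity_dirac _ hmeas]
    have h0 : ENNReal.ofReal (bq z0 false) = 1 := by simp [bq, z0]
    have hh : ENNReal.ofReal (bq zh false) = ENNReal.ofReal (1/2) := by norm_num [bq, zh]
    have h1 : ENNReal.ofReal (bq z1 false) = 0 := by simp [bq, z1]
    rw [h0, hh, h1, zero_smul, smul_zero, add_zero, one_smul, smul_smul,
      ← ENNReal.ofReal_mul hw1, show (1 - 2*W α ε) * (1/2) = (1 - 2*W α ε)/2 from by ring]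
  have hZ : (∫⁻ θ, ENNReal.ofReal (bq θ false) ∂(μ₀ α ε)) = ENNReal.ofReal (1/2) := by
    have h := congrArg (fun m : Measure Θ' => m Set.univ) hWD
    simp only [withDensity_apply _ MeasurableSet.univ, Measure.restrict_univ,
      Measure.add_apply, Measure.smul_apply, measure_univ, smul_eq_mul, mul_one] at h
    rw [h, ← ENNReal.ofReal_add hw0 (by linarith),
      show W α ε + (1 - 2*W α ε)/2 = 1/2 from by ring]
  have hinv : (ENNReal.ofReal ((1:ℝ)/2))⁻¹ = 2 := by
    rw [show (1/2:ℝ) = 2⁻¹ from by norm_num, ENNReal.ofReal_inv_of_pos (by norm_num)]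
    norm_num
  rw [bPost, hπ, hWD, hZ, hinv, smul_add, smul_smul, smul_smul,
    show (2:ℝ≥0∞) = ENNReal.ofReal 2 from by norm_num,
    ← ENNReal.ofReal_mul (by norm_num), ← ENNReal.ofReal_mul (by norm_num),
    show 2 * ((1 - 2*W α ε)/2) = 1 - 2*W α ε from by ring, Q0, add_comm]

end numeric
end
end BernAux
namespace BernAux
noncomputable section
open Measure ENNReal Set
open scoped Classical

lemma ball_measurable (M r : ℝ) : MeasurableSet {θ : Θ' | |(θ:ℝ) - M| ≤ r} := by
  have : Continuous fun θ : Θ' => |(θ:ℝ) - M| :=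
    (continuous_subtype_val.sub continuous_const).abs
  exact (isClosed_le this continuous_const).measurableSet

lemma mean_two_atom (u v : Θ') {a b : ℝ} (ha : 0 ≤ a) (hb : 0 ≤ b) :
    bMean (ENNReal.ofReal a • Measure.dirac u + ENNReal.ofReal b • Measure.dirac v)
      = a * u.val + b * v.val := by
  rw [bMean, integral_two_atom u v ha hb measurable_subtype_coe]

lemma level_two_atom_far (u v : Θ') {a b β M : ℝ} (ha : 0 ≤ a) (hb : 0 ≤ b)
    (hM : bMean (ENNReal.ofReal a • Measure.dirac u + ENNReal.ofReal b • Measure.dirac v) = M)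
    (hd : |u.val - M| ≤ |v.val - M|) (hd2 : 0 < |v.val - M|)
    (h1 : 1 - β ≤ a + b) (h2 : a < 1 - β) :
    bBallLevel (ENNReal.ofReal a • Measure.dirac u + ENNReal.ofReal b • Measure.dirac v) β
      = |v.val - M| := by
  rw [bBallLevel]
  have hset : {r : ℝ | 0 < r ∧ 1 - β ≤
      ((ENNReal.ofReal a • Measure.dirac u + ENNReal.ofReal b • Measure.dirac v)
        {θ : Θ' | |(θ:ℝ) - bMean (ENNReal.ofReal a • Measure.dirac u
          + ENNReal.ofReal b • Measure.dirac v)| ≤ r}).toReal} = Set.Ici (|v.val - M|) := by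
    ext r
    rw [Set.mem_setOf_eq, Set.mem_Ici, hM,
      two_atom_apply_toReal u v ha hb (ball_measurable M r)]
    simp only [Set.mem_setOf_eq]
    constructor
    · rintro ⟨hr0, hr⟩
      by_contra hcon
      push_neg at hcon
      rw [if_neg (show ¬ |v.val - M| ≤ r from by linarith)] at hr
      rw [add_zero] at hr
      split_ifs at hr <;> linarith
    · intro h
      refine ⟨lt_of_lt_of_le hd2 h, ?_⟩
      rw [if_pos (le_trans hd h), if_pos h]
      linarith
  rw [hset, csInf_Ici]

lemma level_two_atom_near (u v : Θ') {a b β M : ℝ} (ha : 0 ≤ a) (hb : 0 ≤ b)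
    (hM : bMean (ENNReal.ofReal a • Measure.dirac u + ENNReal.ofReal b • Measure.dirac v) = M)
    (hd : |u.val - M| ≤ |v.val - M|) (hd1 : 0 < |u.val - M|)
    (h1 : 1 - β ≤ a) (hβ : β < 1) :
    bBallLevel (ENNReal.ofReal a • Measure.dirac u + ENNReal.ofReal b • Measure.dirac v) β
      = |u.val - M| := by
  rw [bBallLevel]
  have hset : {r : ℝ | 0 < r ∧ 1 - β ≤
      ((ENNReal.ofReal a • Measure.dirac u + ENNReal.ofReal b • Measure.dirac v)
        {θ : Θ' | |(θ:ℝ) - bMean (ENNReal.ofReal a • Measure.dirac u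
          + ENNReal.ofReal b • Measure.dirac v)| ≤ r}).toReal} = Set.Ici (|u.val - M|) := by
    ext r
    rw [Set.mem_setOf_eq, Set.mem_Ici, hM,
      two_atom_apply_toReal u v ha hb (ball_measurable M r)]
    simp only [Set.mem_setOf_eq]
    constructor
    · rintro ⟨hr0, hr⟩
      by_contra hcon
      push_neg at hcon
      rw [if_neg (show ¬ |u.val - M| ≤ r from by linarith),
        if_neg (show ¬ |v.val - M| ≤ r from by linarith)] at hr
      linarith
    · intro h
      refine ⟨lt_of_lt_of_le hd1 h, ?_⟩
      rw [if_pos h]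
      split_ifs <;> linarith
  rw [hset, csInf_Ici]

end
end BernAux
namespace BernAux
noncomputable section
open Measure ENNReal Set
open scoped Classical

section numeric
variable {α ε : ℝ} (hα : α ∈ Set.Ioo (0:ℝ) 0.2) (hε : ε ∈ Set.Ioo 0 α)
include hα hε

lemma mean_Q1 : bMean (Q1 α ε) = 1/2 + W α ε := by
  have hw1 := (W_facts hα hε).2.2.2
  have hw0 := (W_pos hα hε).le
  rw [Q1, mean_two_atom zh z1 hw1 (by linarith)]
  show (1 - 2*W α ε) * (1/2) + 2*W α ε * 1 = 1/2 + W α ε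
  ring

lemma mean_Q0 : bMean (Q0 α ε) = 1/2 - W α ε := by
  have hw1 := (W_facts hα hε).2.2.2
  have hw0 := (W_pos hα hε).le
  rw [Q0, mean_two_atom zh z0 hw1 (by linarith)]
  show (1 - 2*W α ε) * (1/2) + 2*W α ε * 0 = 1/2 - W α ε
  ring

lemma abs_zh_Q1 : |(zh : Θ').val - (1/2 + W α ε)| = W α ε := by
  have hw0 := (W_pos hα hε).le
  rw [show (zh : Θ').val - (1/2 + W α ε) = -(W α ε) from by show (1:ℝ)/2 - _ = _; ring,
    abs_neg, abs_of_nonneg hw0]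

lemma abs_z1_Q1 : |(z1 : Θ').val - (1/2 + W α ε)| = 1/2 - W α ε := by
  have hw4 := (W_facts hα hε).2.2.1
  rw [show (z1 : Θ').val - (1/2 + W α ε) = 1/2 - W α ε from by show (1:ℝ) - _ = _; ring,
    abs_of_nonneg (by linarith)]

lemma abs_zh_Q0 : |(zh : Θ').val - (1/2 - W α ε)| = W α ε := by
  have hw0 := (W_pos hα hε).le
  rw [show (zh : Θ').val - (1/2 - W α ε) = W α ε from by show (1:ℝ)/2 - _ = _; ring,
    abs_of_nonneg hw0]

lemma abs_z0_Q0 : |(z0 : Θ').val - (1/2 - W α ε)| = 1/2 - W α ε := by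
  have hw4 := (W_facts hα hε).2.2.1
  rw [show (z0 : Θ').val - (1/2 - W α ε) = -(1/2 - W α ε) from by show (0:ℝ) - _ = _; ring,
    abs_neg, abs_of_nonneg (by linarith)]

lemma level_Q1_fat : bBallLevel (Q1 α ε) (α - ε) = 1/2 - W α ε := by
  obtain ⟨hwa, haw, hw4, hw1⟩ := W_facts hα hε
  have hw0 := W_pos hα hε
  have hε0 := hε.1; have hεα := hε.2
  have h := level_two_atom_far (a := 1 - 2*W α ε) (b := 2*W α ε) (β := α - ε) (M := 1/2 + W α ε) zh z1 hw1 (by linarith)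
    (by rw [← Q1]; exact mean_Q1 hα hε)
    (by rw [abs_zh_Q1 hα hε, abs_z1_Q1 hα hε]; linarith)
    (by rw [abs_z1_Q1 hα hε]; linarith) (by linarith) (by linarith)
  rw [← Q1, abs_z1_Q1 hα hε] at h
  exact h

lemma level_Q1 : bBallLevel (Q1 α ε) α = W α ε := by
  obtain ⟨hwa, haw, hw4, hw1⟩ := W_facts hα hε
  have hw0 := W_pos hα hε
  have hα2 : α < 0.2 := hα.2
  have hα2' : α < 1/5 := by linarith [show (0.2:ℝ) = 1/5 from by norm_num]
  have h := level_two_atom_near (a := 1 - 2*W α ε) (b := 2*W α ε) (β := α) (M := 1/2 + W α ε) zh z1 hw1 (by linarith)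
    (by rw [← Q1]; exact mean_Q1 hα hε)
    (by rw [abs_zh_Q1 hα hε, abs_z1_Q1 hα hε]; linarith)
    (by rw [abs_zh_Q1 hα hε]; linarith) (by linarith) (by linarith)
  rw [← Q1, abs_zh_Q1 hα hε] at h
  exact h

lemma level_Q0_fat : bBallLevel (Q0 α ε) (α - ε) = 1/2 - W α ε := by
  obtain ⟨hwa, haw, hw4, hw1⟩ := W_facts hα hε
  have hw0 := W_pos hα hε
  have hε0 := hε.1; have hεα := hε.2
  have h := level_two_atom_far (a := 1 - 2*W α ε) (b := 2*W α ε) (β := α - ε) (M := 1/2 - W α ε) zh z0 hw1 (by linarith)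
    (by rw [← Q0]; exact mean_Q0 hα hε)
    (by rw [abs_zh_Q0 hα hε, abs_z0_Q0 hα hε]; linarith)
    (by rw [abs_z0_Q0 hα hε]; linarith) (by linarith) (by linarith)
  rw [← Q0, abs_z0_Q0 hα hε] at h
  exact h

lemma level_Q0 : bBallLevel (Q0 α ε) α = W α ε := by
  obtain ⟨hwa, haw, hw4, hw1⟩ := W_facts hα hε
  have hw0 := W_pos hα hε
  have hα2 : α < 0.2 := hα.2
  have hα2' : α < 1/5 := by linarith [show (0.2:ℝ) = 1/5 from by norm_num]
  have h := level_two_atom_near (a := 1 - 2*W α ε) (b := 2*W α ε) (β := α) (M := 1/2 - W α ε) zh z0 hw1 (by linarith)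
    (by rw [← Q0]; exact mean_Q0 hα hε)
    (by rw [abs_zh_Q0 hα hε, abs_z0_Q0 hα hε]; linarith)
    (by rw [abs_zh_Q0 hα hε]; linarith) (by linarith) (by linarith)
  rw [← Q0, abs_zh_Q0 hα hε] at h
  exact h

lemma ball_Q1_fat : bCredBall (Q1 α ε) (α - ε)
    = {θ : Θ' | |θ.val - (1/2 + W α ε)| ≤ 1/2 - W α ε} := by
  rw [bCredBall, mean_Q1 hα hε, level_Q1_fat hα hε]

lemma ball_Q1 : bCredBall (Q1 α ε) α
    = {θ : Θ' | |θ.val - (1/2 + W α ε)| ≤ W α ε} := by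
  rw [bCredBall, mean_Q1 hα hε, level_Q1 hα hε]

lemma ball_Q0_fat : bCredBall (Q0 α ε) (α - ε)
    = {θ : Θ' | |θ.val - (1/2 - W α ε)| ≤ 1/2 - W α ε} := by
  rw [bCredBall, mean_Q0 hα hε, level_Q0_fat hα hε]

lemma ball_Q0 : bCredBall (Q0 α ε) α
    = {θ : Θ' | |θ.val - (1/2 - W α ε)| ≤ W α ε} := by
  rw [bCredBall, mean_Q0 hα hε, level_Q0 hα hε]

end numeric
end
end BernAux
namespace BernAux
noncomputable section
open Measure ENNReal Set
open scoped Classical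

/-- acceptance probability for the matching prior -/
def freal (α t : ℝ) : ℝ := if t < α then 0 else if t ≤ 1 - α then 1 - α else (1-α)/t

def ψ₀ (α : ℝ) (θ : Θ') (x : Bool) : ℝ := bif x then freal α θ.val else freal α (1 - θ.val)

lemma freal_measurable (α : ℝ) : Measurable (freal α) := by
  unfold freal
  exact Measurable.ite measurableSet_Iio measurable_const
    (Measurable.ite measurableSet_Iic measurable_const (measurable_const.div measurable_id))

section numer2
variable {α : ℝ} (hα0 : 0 < α) (hα5 : α < 1/2)
include hα0 hα5

lemma freal_mem (t : ℝ) : freal α t ∈ Set.Icc (0:ℝ) 1 := by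
  unfold freal
  split_ifs with h1 h2
  · constructor <;> norm_num
  · constructor <;> linarith
  · push_neg at h1 h2
    have ht : 0 < t := by linarith
    constructor
    · exact div_nonneg (by linarith) ht.le
    · rw [div_le_one ht]; linarith

lemma freal_ne_zero_iff {t : ℝ} (h1 : t ≤ 1) : freal α t ≠ 0 ↔ α ≤ t := by
  unfold freal
  split_ifs with ha hb
  · exact ⟨fun h => absurd rfl h, fun h => absurd ha (by push_neg; linarith)⟩
  · push_neg at ha
    exact ⟨fun _ => ha, fun _ => by intro hc; linarith⟩
  · push_neg at ha hb
    have hne : (1-α)/t ≠ 0 := div_ne_zero (by intro hc; linarith) (by intro hc; linarith)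
    exact ⟨fun _ => ha, fun _ => hne⟩

lemma freal_pair {t : ℝ} (h0 : 0 ≤ t) (h1 : t ≤ 1) :
    (1 - t) * freal α (1 - t) + t * freal α t = 1 - α := by
  unfold freal
  rcases lt_or_ge t α with h | h
  · rw [if_pos h, if_neg (show ¬(1 - t < α) from by push_neg; linarith),
      if_neg (show ¬(1 - t ≤ 1 - α) from by push_neg; linarith), mul_zero, add_zero,
      mul_comm, div_mul_cancel₀ _ (show (1:ℝ) - t ≠ 0 from by intro hc; nlinarith)]
  rcases le_or_gt t (1-α) with h2 | h2
  · rw [if_neg (show ¬(t < α) from by push_neg; linarith), if_pos h2,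
      if_neg (show ¬(1 - t < α) from by push_neg; linarith),
      if_pos (show 1 - t ≤ 1 - α from by linarith)]
    ring
  · rw [if_neg (show ¬(t < α) from by push_neg; linarith),
      if_neg (show ¬(t ≤ 1 - α) from by push_neg; linarith),
      if_pos (show 1 - t < α from by linarith), mul_zero, zero_add,
      mul_comm, div_mul_cancel₀ _ (show t ≠ 0 from by intro hc; nlinarith)]

lemma freal_half : freal α (1/2) = 1 - α := by
  unfold freal
  rw [if_neg (show ¬((1:ℝ)/2 < α) from by push_neg; linarith),
    if_pos (show (1:ℝ)/2 ≤ 1 - α from by linarith)]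

lemma freal_one : freal α 1 = 1 - α := by
  unfold freal
  rw [if_neg (show ¬((1:ℝ) < α) from by push_neg; linarith),
    if_neg (show ¬((1:ℝ) ≤ 1 - α) from by push_neg; linarith), div_one]

end numer2

/-- general-measure facts -/

lemma mean_bounds (μ : Measure Θ') [IsProbabilityMeasure μ] :
    0 ≤ bMean μ ∧ bMean μ ≤ 1 := by
  have hint : Integrable (fun θ : Θ' => (θ:ℝ)) μ := by
    refine Integrable.mono' (integrable_const 1)
      measurable_subtype_coe.aestronglyMeasurable ?_
    filter_upwards with θ
    rw [Real.norm_eq_abs, abs_le]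
    exact ⟨by linarith [θ.2.1], θ.2.2⟩
  constructor
  · exact integral_nonneg fun θ => θ.2.1
  · calc ∫ θ : Θ', (θ:ℝ) ∂μ
        ≤ ∫ _ : Θ', (1:ℝ) ∂μ := integral_mono hint (integrable_const 1) (fun θ => θ.2.2)
      _ = 1 := by simp

lemma one_mem_S (μ : Measure Θ') [IsProbabilityMeasure μ] {β : ℝ} (hβ : 0 < β) :
    (1:ℝ) ∈ {r : ℝ | 0 < r ∧ 1 - β ≤ (μ {θ : Θ' | |(θ:ℝ) - bMean μ| ≤ r}).toReal} := by
  obtain ⟨hM0, hM1⟩ := mean_bounds μ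
  refine ⟨one_pos, ?_⟩
  have huniv : {θ : Θ' | |(θ:ℝ) - bMean μ| ≤ 1} = Set.univ := by
    refine Set.eq_univ_iff_forall.2 fun θ => ?_
    rw [Set.mem_setOf_eq, abs_le]
    exact ⟨by linarith [θ.2.1], by linarith [θ.2.2]⟩
  rw [huniv, measure_univ]
  norm_num; linarith

lemma cred_ball_mass (μ : Measure Θ') [IsProbabilityMeasure μ] {β : ℝ} (hβ : 0 < β) :
    ENNReal.ofReal (1 - β) ≤ μ (bCredBall μ β) := by
  set M := bMean μ with hMdef
  set S := {r : ℝ | 0 < r ∧ 1 - β ≤ (μ {θ : Θ' | |(θ:ℝ) - M| ≤ r}).toReal} with hSdef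
  have hone : (1:ℝ) ∈ S := one_mem_S μ hβ
  have hbdd : BddBelow S := ⟨0, fun r hr => hr.1.le⟩
  have hL : bBallLevel μ β = sInf S := rfl
  have hiInter : bCredBall μ β
      = ⋂ n : ℕ, {θ : Θ' | |(θ:ℝ) - M| ≤ sInf S + 1/(n+1)} := by
    rw [bCredBall]
    ext θ
    simp only [Set.mem_iInter, Set.mem_setOf_eq, hL]
    constructor
    · intro h n
      have h1 : 0 < 1/((n:ℝ)+1) := by positivity
      linarith
    · intro h
      refine le_of_forall_pos_le_add fun δ hδ => ?_
      obtain ⟨n, hn⟩ := exists_nat_one_div_lt hδ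
      have := h n
      linarith
  have hmono : ∀ n : ℕ, ENNReal.ofReal (1-β)
      ≤ μ {θ : Θ' | |(θ:ℝ) - M| ≤ sInf S + 1/(n+1)} := by
    intro n
    have hlt : sInf S < sInf S + 1/(n+1) := by
      have h1 : 0 < 1/((n:ℝ)+1) := by positivity
      linarith
    obtain ⟨r, hrS, hr⟩ := exists_lt_of_csInf_lt ⟨1, hone⟩ hlt
    calc ENNReal.ofReal (1-β) ≤ μ {θ : Θ' | |(θ:ℝ) - M| ≤ r} :=
          ENNReal.ofReal_le_of_le_toReal hrS.2
    _ ≤ _ := measure_mono fun θ hθ => le_trans hθ hr.le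
  rw [hiInter]
  have hanti : Antitone fun n : ℕ => {θ : Θ' | |(θ:ℝ) - M| ≤ sInf S + 1/(n+1)} := by
    intro n m hnm θ hθ
    simp only [Set.mem_setOf_eq] at hθ ⊢
    have : 1/((m:ℝ)+1) ≤ 1/((n:ℝ)+1) := by
      apply one_div_le_one_div_of_le (by positivity)
      exact_mod_cast by omega
    linarith
  rw [hanti.measure_iInter (fun n => (ball_measurable M _).nullMeasurableSet)
    ⟨0, measure_ne_top μ _⟩]
  exact le_iInf hmono

lemma level_mono (μ : Measure Θ') [IsProbabilityMeasure μ] {β β' : ℝ} (hβ' : 0 < β')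
    (hββ' : β' ≤ β) : bBallLevel μ β ≤ bBallLevel μ β' := by
  rw [bBallLevel, bBallLevel]
  refine csInf_le_csInf ⟨0, fun r hr => hr.1.le⟩ ⟨1, one_mem_S μ hβ'⟩ ?_
  intro r hr
  exact ⟨hr.1, le_trans (by linarith) hr.2⟩

lemma cred_ball_mono (μ : Measure Θ') [IsProbabilityMeasure μ] {β β' : ℝ} (hβ' : 0 < β')
    (hββ' : β' ≤ β) : bCredBall μ β ⊆ bCredBall μ β' :=
  fun θ hθ => le_trans hθ (level_mono μ hβ' hββ')

end
end BernAux
namespace BernAux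
noncomputable section
open Measure ENNReal Set
open scoped Classical

/-- the acceptance probability function for a generic prior -/
def ψgen (α ε : ℝ) (π : ProbabilityMeasure Θ') (θ : Θ') (x : Bool) : ℝ :=
  Set.indicator (bCredBall (bPost π x) (α - ε))
    (fun _ => (1-α) / max ((bPost π x) (bCredBall (bPost π x) (α - ε))).toReal (1 - (α - ε))) θ

/-- the full acceptance probability function -/
def ψfull (α ε : ℝ) (π : ProbabilityMeasure Θ') (θ : Θ') (x : Bool) : ℝ :=
  if (π : Measure Θ') = μ₀ α ε then ψ₀ α θ x else ψgen α ε π θ x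

lemma bq_nonneg (θ : Θ') (x : Bool) : 0 ≤ bq θ x := by
  cases x <;> simp [bq] <;> [linarith [θ.2.2]; exact θ.2.1]

lemma bq_le_one (θ : Θ') (x : Bool) : bq θ x ≤ 1 := by
  cases x <;> simp [bq] <;> [linarith [θ.2.1]; exact θ.2.2]

lemma Z_le_one (π : ProbabilityMeasure Θ') (x : Bool) :
    (∫⁻ θ, ENNReal.ofReal (bq θ x) ∂(π : Measure Θ')) ≤ 1 := by
  calc (∫⁻ θ, ENNReal.ofReal (bq θ x) ∂(π : Measure Θ'))
      ≤ ∫⁻ _, 1 ∂(π : Measure Θ') :=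
        lintegral_mono fun θ => ENNReal.ofReal_le_one.2 (bq_le_one θ x)
    _ = 1 := by simp

lemma post_prob (π : ProbabilityMeasure Θ') (x : Bool)
    (hZ : 0 < ∫⁻ θ, ENNReal.ofReal (bq θ x) ∂(π : Measure Θ')) :
    IsProbabilityMeasure (bPost π x) := by
  constructor
  rw [bPost, Measure.smul_apply, withDensity_apply _ MeasurableSet.univ,
    Measure.restrict_univ, smul_eq_mul]
  exact ENNReal.inv_mul_cancel hZ.ne' (lt_of_le_of_lt (Z_le_one π x) one_lt_top).ne

lemma ball_closed (M L : ℝ) : IsClosed {θ : Θ' | |(θ:ℝ) - M| ≤ L} :=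
  isClosed_le ((continuous_subtype_val.sub continuous_const).abs) continuous_const

section numeric3
variable {α ε : ℝ} (hα : α ∈ Set.Ioo (0:ℝ) 0.2) (hε : ε ∈ Set.Ioo 0 α)
include hα hε

lemma hα0 : 0 < α := hα.1
lemma hα5 : α < 1/2 := by
  have := hα.2; rw [show (0.2:ℝ) = 1/5 from by norm_num] at this; linarith

lemma ψgen_mem (π : ProbabilityMeasure Θ') (θ : Θ') (x : Bool) :
    ψgen α ε π θ x ∈ Set.Icc (0:ℝ) 1 := by
  have h5 := hα5 hα hε
  obtain ⟨h0, h2⟩ := hα; obtain ⟨he0, heα⟩ := hε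
  set d := max ((bPost π x) (bCredBall (bPost π x) (α - ε))).toReal (1 - (α - ε)) with hd
  have hd1 : 1 - (α - ε) ≤ d := le_max_right _ _
  have hdpos : 0 < d := lt_of_lt_of_le (by linarith) hd1
  have hc0 : 0 ≤ (1-α)/d := div_nonneg (by linarith) hdpos.le
  have hc1 : (1-α)/d ≤ 1 := by rw [div_le_one hdpos]; linarith
  rw [ψgen]
  by_cases hθ : θ ∈ bCredBall (bPost π x) (α - ε)
  · rw [Set.indicator_of_mem hθ]; exact ⟨hc0, hc1⟩
  · rw [Set.indicator_of_notMem hθ]; exact ⟨le_rfl, zero_le_one⟩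

lemma ψgen_ne_zero (π : ProbabilityMeasure Θ') (x : Bool) :
    {θ : Θ' | ψgen α ε π θ x ≠ 0} = bCredBall (bPost π x) (α - ε) := by
  have h5 := hα5 hα hε
  obtain ⟨h0, h2⟩ := hα; obtain ⟨he0, heα⟩ := hε
  set d := max ((bPost π x) (bCredBall (bPost π x) (α - ε))).toReal (1 - (α - ε)) with hd
  have hd1 : 1 - (α - ε) ≤ d := le_max_right _ _
  have hdpos : 0 < d := lt_of_lt_of_le (by linarith) hd1
  have hc : (1-α)/d ≠ 0 := (div_pos (by linarith) hdpos).ne'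
  ext θ
  simp only [Set.mem_setOf_eq, ψgen]
  by_cases hθ : θ ∈ bCredBall (bPost π x) (α - ε)
  · simp [Set.indicator_of_mem hθ, hc, hθ]
    exact ⟨fun h => by linarith, fun h => by rw [← hd] at h; linarith⟩
  · simp [Set.indicator_of_notMem hθ, hθ]

lemma integral_ψgen (π : ProbabilityMeasure Θ') (x : Bool)
    (hZ : 0 < ∫⁻ θ, ENNReal.ofReal (bq θ x) ∂(π : Measure Θ')) :
    ∫ θ, ψgen α ε π θ x ∂(bPost π x) = 1 - α := by
  obtain ⟨h0, h2⟩ := hα; obtain ⟨he0, heα⟩ := hε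
  haveI := post_prob π x hZ
  set μ := bPost π x with hμ
  have hmass : 1 - (α - ε) ≤ (μ (bCredBall μ (α - ε))).toReal := by
    have h := cred_ball_mass μ (show 0 < α - ε from by linarith)
    have := ENNReal.toReal_mono (measure_ne_top μ _) h
    rwa [ENNReal.toReal_ofReal (by linarith)] at this
  have hne : (μ (bCredBall μ (α - ε))).toReal ≠ 0 := by
    intro hc; rw [hc] at hmass; linarith
  have hd : max (μ (bCredBall μ (α - ε))).toReal (1 - (α - ε))
      = (μ (bCredBall μ (α - ε))).toReal := max_eq_left hmass
  have hBmeas : MeasurableSet (bCredBall μ (α - ε)) := ball_measurable _ _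
  simp only [ψgen, ← hμ]
  rw [integral_indicator_const _ hBmeas, hd, smul_eq_mul, mul_comm, measureReal_def,
    div_mul_cancel₀ _ hne]

end numeric3
end
end BernAux
namespace BernAux
noncomputable section
open Measure ENNReal Set
open scoped Classical

lemma measurable_pair {g : Θ' → Bool → ℝ} (hf : Measurable fun θ => g θ false)
    (ht : Measurable fun θ => g θ true) : Measurable fun p : Θ' × Bool => g p.1 p.2 := by
  have hrw : (fun p : Θ' × Bool => g p.1 p.2)
      = fun p => if p.2 = true then g p.1 true else g p.1 false := by
    funext p; rcases p with ⟨θ, x⟩; cases x <;> simp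
  rw [hrw]
  exact Measurable.ite (measurable_snd (measurableSet_singleton true))
    (ht.comp measurable_fst) (hf.comp measurable_fst)

lemma marg_singleton (π : ProbabilityMeasure Θ') (x : Bool) :
    ((π : Measure Θ').bind (fun θ => bP θ)) {x}
      = ∫⁻ θ, ENNReal.ofReal (bq θ x) ∂(π : Measure Θ') := by
  rw [Measure.bind_apply (show MeasurableSet ({x} : Set Bool) from trivial)
    measurable_bP.aemeasurable]
  refine lintegral_congr fun θ => ?_
  cases x <;> simp [bP_eq, Measure.dirac_apply, bq]

lemma ae_of_Z_pos (π : ProbabilityMeasure Θ') {P : Bool → Prop}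
    (h : ∀ x, 0 < (∫⁻ θ, ENNReal.ofReal (bq θ x) ∂(π : Measure Θ')) → P x) :
    ∀ᵐ x ∂((π : Measure Θ').bind fun θ => bP θ), P x := by
  rw [ae_iff]
  set m := (π : Measure Θ').bind fun θ => bP θ with hm
  set s := {x : Bool | (∫⁻ θ, ENNReal.ofReal (bq θ x) ∂(π : Measure Θ')) = 0} with hs
  have hsub : {x | ¬ P x} ⊆ s := by
    intro x hx
    by_contra hc
    exact hx (h x (pos_iff_ne_zero.2 hc))
  refine measure_mono_null hsub ?_
  have hx : ∀ x : Bool, m ({x} ∩ s) = 0 := by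
    intro x
    by_cases hZx : x ∈ s
    · refine le_antisymm ?_ zero_le
      calc m ({x} ∩ s) ≤ m {x} := measure_mono Set.inter_subset_left
        _ = 0 := by rw [hm, marg_singleton π x]; exact hZx
    · have hempty : {x} ∩ s = ∅ := by
        ext y
        simp only [Set.mem_inter_iff, Set.mem_singleton_iff, Set.mem_empty_iff_false, iff_false,
          not_and]
        rintro rfl; exact hZx
      rw [hempty, measure_empty]
  have hdecomp : s = ({false} ∩ s) ∪ ({true} ∩ s) := by
    ext y; cases y <;> simp
  rw [hdecomp]
  refine le_antisymm ?_ zero_le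
  calc m (({false} ∩ s) ∪ ({true} ∩ s)) ≤ m ({false} ∩ s) + m ({true} ∩ s) :=
        measure_union_le _ _
    _ = 0 := by rw [hx false, hx true, add_zero]

section numeric4
variable {α ε : ℝ} (hα : α ∈ Set.Ioo (0:ℝ) 0.2) (hε : ε ∈ Set.Ioo 0 α)
include hα hε

lemma int_ψ₀_Q1 : ∫ θ, ψ₀ α θ true ∂(Q1 α ε) = 1 - α := by
  have h0 := hα0 hα hε; have h5 := hα5 hα hε
  obtain ⟨hwa, haw, hw4, hw1⟩ := W_facts hα hε
  have hmeas : Measurable (fun θ : Θ' => ψ₀ α θ true) :=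
    (freal_measurable α).comp measurable_subtype_coe
  rw [Q1, integral_two_atom zh z1 hw1 (by linarith [W_pos hα hε]) hmeas]
  show (1 - 2*W α ε) * freal α ((1:ℝ)/2) + 2*W α ε * freal α 1 = 1 - α
  rw [freal_half h0 h5, freal_one h0 h5]; ring

lemma int_ψ₀_Q0 : ∫ θ, ψ₀ α θ false ∂(Q0 α ε) = 1 - α := by
  have h0 := hα0 hα hε; have h5 := hα5 hα hε
  obtain ⟨hwa, haw, hw4, hw1⟩ := W_facts hα hε
  have hmeas : Measurable (fun θ : Θ' => ψ₀ α θ false) :=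
    (freal_measurable α).comp (measurable_const.sub measurable_subtype_coe)
  rw [Q0, integral_two_atom zh z0 hw1 (by linarith [W_pos hα hε]) hmeas]
  show (1 - 2*W α ε) * freal α (1 - (1:ℝ)/2) + 2*W α ε * freal α (1 - (0:ℝ)) = 1 - α
  rw [show (1:ℝ) - 1/2 = 1/2 from by norm_num, show (1:ℝ) - 0 = 1 from by norm_num,
    freal_half h0 h5, freal_one h0 h5]
  ring

lemma supp_ψ₀_true : {θ : Θ' | ψ₀ α θ true ≠ 0} = {θ : Θ' | α ≤ θ.val} := by
  have h0 := hα0 hα hε; have h5 := hα5 hα hε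
  ext θ
  show freal α θ.val ≠ 0 ↔ _
  exact freal_ne_zero_iff h0 h5 θ.2.2

lemma supp_ψ₀_false : {θ : Θ' | ψ₀ α θ false ≠ 0} = {θ : Θ' | θ.val ≤ 1 - α} := by
  have h0 := hα0 hα hε; have h5 := hα5 hα hε
  ext θ
  show freal α (1 - θ.val) ≠ 0 ↔ _
  rw [freal_ne_zero_iff h0 h5 (by linarith [θ.2.1])]
  constructor <;> intro <;> (simp only [Set.mem_setOf_eq] at *; linarith)

lemma matching (θ : Θ') : ∫ x, (1 - ψ₀ α θ x) ∂(bP θ) ≤ α := by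
  have h0 := hα0 hα hε; have h5 := hα5 hα hε
  have hmeas : Measurable (fun x : Bool => 1 - ψ₀ α θ x) := fun _ _ => trivial
  rw [bP_eq, integral_two_atom false true (by linarith [θ.2.2]) θ.2.1 hmeas]
  have hp := freal_pair h0 h5 θ.2.1 θ.2.2
  have heq : (1 - θ.val) * (1 - freal α (1 - θ.val)) + θ.val * (1 - freal α θ.val) = α := by
    linear_combination -hp
  exact le_of_eq heq

end numeric4
end
end BernAux

/-- for the Bernoulli model with `α ∈ (0, 0.2)` and `ε ∈ (0, α)`, there are a
family of `1-α` credible regions (given by its acceptance probability function `ψ`) and a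
matching prior `π₀`, the supports of the regions agreeing with the usual credible balls of the
posteriors up to `ε`-fattenings (whenever the posterior is defined, i.e. the normalizing
constant is positive). -/
theorem bernoulli_matching_prior_for_approximate_credible_balls
    (α ε : ℝ) (hα : α ∈ Set.Ioo (0:ℝ) 0.2) (hε : ε ∈ Set.Ioo 0 α) :
    ∃ ψ : ProbabilityMeasure ↥BernΘ → ↥BernΘ → Bool → ℝ,
    ∃ π₀ : ProbabilityMeasure ↥BernΘ,
      (∀ π θ x, ψ π θ x ∈ Set.Icc (0:ℝ) 1) ∧
      (∀ π : ProbabilityMeasure ↥BernΘ, Measurable fun p : ↥BernΘ × Bool => ψ π p.1 p.2) ∧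
      -- (a) credibility exactly `1 - α`
      (∀ π : ProbabilityMeasure ↥BernΘ,
        ∀ᵐ x ∂((π : Measure ↥BernΘ).bind fun θ => bP θ),
          ∫ θ, ψ π θ x ∂(bPost π x) = 1 - α) ∧
      -- (b) `π₀` is a matching prior
      (∀ θ : ↥BernΘ, ∫ x, (1 - ψ π₀ θ x) ∂(bP θ) ≤ α) ∧
      -- (c) support containments relative to the usual credible balls
      (∀ π : ProbabilityMeasure ↥BernΘ, ∀ x : Bool,
        0 < ∫⁻ θ, ENNReal.ofReal (bq θ x) ∂(π : Measure ↥BernΘ) →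
        (Subtype.val '' closure {θ : ↥BernΘ | ψ π θ x ≠ 0} ⊆
            Metric.thickening ε (Subtype.val '' bCredBall (bPost π x) (α - ε)) ∧
          Subtype.val '' bCredBall (bPost π x) α ⊆
            Metric.thickening ε (Subtype.val '' closure {θ : ↥BernΘ | ψ π θ x ≠ 0}))) := by
  have h0 : 0 < α := hα.1
  have h5 : α < 1/2 := BernAux.hα5 hα hε
  have he0 : 0 < ε := hε.1
  have heα : ε < α := hε.2
  obtain ⟨hwa, haw, hw4, hw1⟩ := BernAux.W_facts hα hε
  have hw0 := BernAux.W_pos hα hε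
  haveI hprob : IsProbabilityMeasure (BernAux.μ₀ α ε) := BernAux.isProb_μ₀ hα hε
  refine ⟨BernAux.ψfull α ε, ⟨BernAux.μ₀ α ε, hprob⟩, ?_, ?_, ?_, ?_, ?_⟩
  · -- range in [0,1]
    intro π θ x
    rw [BernAux.ψfull]
    split_ifs with hπ
    · cases x
      · exact BernAux.freal_mem h0 h5 _
      · exact BernAux.freal_mem h0 h5 _
    · exact BernAux.ψgen_mem hα hε π θ x
  · -- measurability
    intro π
    by_cases hπ : (π : Measure ↥BernΘ) = BernAux.μ₀ α ε
    · have hfun : (fun p : ↥BernΘ × Bool => BernAux.ψfull α ε π p.1 p.2)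
          = fun p => BernAux.ψ₀ α p.1 p.2 := by
        funext p; rw [BernAux.ψfull, if_pos hπ]
      rw [hfun]
      exact BernAux.measurable_pair
        ((BernAux.freal_measurable α).comp (measurable_const.sub measurable_subtype_coe))
        ((BernAux.freal_measurable α).comp measurable_subtype_coe)
    · have hfun : (fun p : ↥BernΘ × Bool => BernAux.ψfull α ε π p.1 p.2)
          = fun p => BernAux.ψgen α ε π p.1 p.2 := by
        funext p; rw [BernAux.ψfull, if_neg hπ]
      rw [hfun]
      refine BernAux.measurable_pair ?_ ?_ <;>
        exact measurable_const.indicator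
          (show MeasurableSet (bCredBall (bPost π _) (α - ε)) from BernAux.ball_measurable _ _)
  · -- (a)
    intro π
    refine BernAux.ae_of_Z_pos π fun x hZ => ?_
    by_cases hπ : (π : Measure ↥BernΘ) = BernAux.μ₀ α ε
    · have hψ : ∀ θ, BernAux.ψfull α ε π θ x = BernAux.ψ₀ α θ x := fun _ => if_pos hπ
      simp only [hψ]
      cases x
      · rw [BernAux.post_false hα hε π hπ]
        exact BernAux.int_ψ₀_Q0 hα hε
      · rw [BernAux.post_true hα hε π hπ]
        exact BernAux.int_ψ₀_Q1 hα hε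
    · have hψ : ∀ θ, BernAux.ψfull α ε π θ x = BernAux.ψgen α ε π θ x := fun _ => if_neg hπ
      simp only [hψ]
      exact BernAux.integral_ψgen hα hε π x hZ
  · -- (b)
    intro θ
    have hψ : ∀ x, BernAux.ψfull α ε ⟨BernAux.μ₀ α ε, hprob⟩ θ x = BernAux.ψ₀ α θ x :=
      fun _ => if_pos rfl
    simp only [hψ]
    exact BernAux.matching hα hε θ
  · -- (c)
    intro π x hZ
    by_cases hπ : (π : Measure ↥BernΘ) = BernAux.μ₀ α ε
    · have hψ : ∀ θ, BernAux.ψfull α ε π θ x = BernAux.ψ₀ α θ x := fun _ => if_pos hπ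
      simp only [hψ]
      cases x
      · rw [BernAux.post_false hα hε π hπ, BernAux.supp_ψ₀_false hα hε,
          (isClosed_le continuous_subtype_val continuous_const).closure_eq]
        constructor
        · refine (Set.image_mono ?_).trans (Metric.self_subset_thickening he0 _)
          rw [BernAux.ball_Q0_fat hα hε]
          intro θ hθ
          simp only [Set.mem_setOf_eq] at hθ ⊢
          rw [abs_le]
          exact ⟨by linarith [θ.2.1], by linarith⟩
        · refine (Set.image_mono ?_).trans (Metric.self_subset_thickening he0 _)
          rw [BernAux.ball_Q0 hα hε]
          intro θ hθ
          simp only [Set.mem_setOf_eq] at hθ ⊢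
          have := abs_le.1 hθ
          linarith [this.1, this.2]
      · rw [BernAux.post_true hα hε π hπ, BernAux.supp_ψ₀_true hα hε,
          (isClosed_le continuous_const continuous_subtype_val).closure_eq]
        constructor
        · refine (Set.image_mono ?_).trans (Metric.self_subset_thickening he0 _)
          rw [BernAux.ball_Q1_fat hα hε]
          intro θ hθ
          simp only [Set.mem_setOf_eq] at hθ ⊢
          rw [abs_le]
          exact ⟨by linarith, by linarith [θ.2.2]⟩
        · refine (Set.image_mono ?_).trans (Metric.self_subset_thickening he0 _)
          rw [BernAux.ball_Q1 hα hε]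
          intro θ hθ
          simp only [Set.mem_setOf_eq] at hθ ⊢
          have := abs_le.1 hθ
          linarith [this.1, this.2]
    · have hψ : ∀ θ, BernAux.ψfull α ε π θ x = BernAux.ψgen α ε π θ x := fun _ => if_neg hπ
      simp only [hψ]
      rw [BernAux.ψgen_ne_zero hα hε π x,
        (show IsClosed (bCredBall (bPost π x) (α - ε)) from BernAux.ball_closed _ _).closure_eq]
      haveI := BernAux.post_prob π x hZ
      constructor
      · exact Metric.self_subset_thickening he0 _
      · refine (Set.image_mono ?_).trans (Metric.self_subset_thickening he0 _)
        exact BernAux.cred_ball_mono _ (by linarith) (by linarith)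
end

section
/- Let Θ′ ⊆ ℝ^d be compact with positive Lebesgue measure, α ∈ (0,1), β ∈ (0,∞), and μ a Borel probability measure on Θ′ absolutely continuous with respect to Lebesgue measure with a Lipschitz density ρ. Set β̂ = β / max(1, Lip(ρ)), where Lip(ρ) is the Lipschitz constant of ρ. For d ≥ 0 define f_d(θ) = 1 if ρ(θ) ≥ d; f_d(θ) = β̂(ρ(θ) − (d − β̂⁻¹)) if d − β̂⁻¹ < ρ(θ) < d; and f_d(θ) = 0 if ρ(θ) ≤ d − β̂⁻¹. Then d* := sup{ d ≥ 0 : ∫_{Θ′} f_d dμ ≥ 1−α } is well-defined and attained, ∫_{Θ′} f_{d*} dμ = 1 − α, and each f_d (in particular f_{d*}) is β-Lipschitz on Θ′. -/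
open MeasureTheory NNReal

/-- Lebesgue measure on a subset of Euclidean space, viewed as a measure on the subtype. -/
noncomputable def lebOn {d : ℕ} (Θ' : Set (EuclideanSpace ℝ (Fin d))) : Measure ↥Θ' :=
  (volume : Measure (EuclideanSpace ℝ (Fin d))).comap Subtype.val

/-- The acceptance function `f_d(θ)` of the relaxed HPD region with renormalized slope `βh`:
`f_d(θ) = min(1, max(0, βh (ρ(θ) − d) + 1))`, i.e. it equals `1` when `ρ(θ) ≥ d`, `0` when
`ρ(θ) ≤ d − βh⁻¹`, and interpolates linearly in between. -/
noncomputable def relaxedHPDFn {T : Type*} (ρ : T → ℝ) (βh dd : ℝ) (θ : T) : ℝ :=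
  min 1 (max 0 (βh * (ρ θ - dd) + 1))

/-- The set of levels `d ≥ 0` at which the relaxed HPD acceptance function has `μ`-integral at
least `1 − α`. -/
noncomputable def relaxedHPDSet {T : Type*} [MeasurableSpace T]
    (μ : Measure T) (ρ : T → ℝ) (α βh : ℝ) : Set ℝ :=
  {dd : ℝ | 0 ≤ dd ∧ 1 - α ≤ ∫ θ, relaxedHPDFn ρ βh dd θ ∂μ}


lemma clamp_lip (a b : ℝ) : |min 1 (max 0 a) - min 1 (max 0 b)| ≤ |a - b| := by
  refine (abs_min_sub_min_le_max _ _ _ _).trans (max_le (by simp) ?_)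
  rw [max_comm 0 a, max_comm 0 b]
  exact abs_max_sub_max_le_abs a b 0

lemma clamp_mem (a : ℝ) : min 1 (max 0 a) ∈ Set.Icc (0:ℝ) 1 :=
  ⟨le_min zero_le_one (le_max_left 0 a), min_le_left _ _⟩

lemma hpd_cont {T : Type*} [TopologicalSpace T] {ρ : T → ℝ} (hρ : Continuous ρ) (βh dd : ℝ) :
    Continuous (relaxedHPDFn ρ βh dd) :=
  continuous_const.min (continuous_const.max
    ((continuous_const.mul (hρ.sub continuous_const)).add continuous_const))

lemma hpd_integrable {T : Type*} [MeasurableSpace T] [TopologicalSpace T] [OpensMeasurableSpace T]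
    {ρ : T → ℝ} (hρ : Continuous ρ) (βh dd : ℝ) (μ : Measure T) [IsFiniteMeasure μ] :
    Integrable (relaxedHPDFn ρ βh dd) μ := by
  refine Integrable.mono' (integrable_const 1) (hpd_cont hρ βh dd).aestronglyMeasurable ?_
  refine Filter.Eventually.of_forall fun θ => ?_
  have h := clamp_mem (βh * (ρ θ - dd) + 1)
  simp only [relaxedHPDFn, Real.norm_eq_abs, abs_le]
  exact ⟨by linarith [h.1], h.2⟩

/-- the relaxed HPD region is well-defined. For compact `Θ' ⊆ ℝ^d` of positive
Lebesgue measure, `α ∈ (0,1)`, `β > 0`, and `μ` absolutely continuous with `K`-Lipschitz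
density `ρ`, setting `β̂ = β / max(1,K)`, the supremum `d* = sup{d ≥ 0 : ∫ f_d dμ ≥ 1−α}` is
over a nonempty bounded set and is attained, `∫ f_{d*} dμ = 1 − α`, and each `f_d` is
`β`-Lipschitz. -/
theorem relaxed_hpd_region_well_defined
    {d : ℕ} (Θ' : Set (EuclideanSpace ℝ (Fin d))) (hΘ'c : IsCompact Θ')
    (hΘ'vol : 0 < volume Θ')
    (α β : ℝ) (hα : α ∈ Set.Ioo (0:ℝ) 1) (hβ : 0 < β)
    (K : ℝ≥0) (ρ : ↥Θ' → ℝ) (hρLip : LipschitzWith K ρ)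
    (μ : ProbabilityMeasure ↥Θ')
    (hdens : (μ : Measure ↥Θ') = (lebOn Θ').withDensity fun θ => ENNReal.ofReal (ρ θ)) :
    (relaxedHPDSet (μ : Measure ↥Θ') ρ α (β / max 1 (K : ℝ))).Nonempty ∧
    BddAbove (relaxedHPDSet (μ : Measure ↥Θ') ρ α (β / max 1 (K : ℝ))) ∧
    sSup (relaxedHPDSet (μ : Measure ↥Θ') ρ α (β / max 1 (K : ℝ))) ∈
      relaxedHPDSet (μ : Measure ↥Θ') ρ α (β / max 1 (K : ℝ)) ∧
    (∫ θ, relaxedHPDFn ρ (β / max 1 (K : ℝ))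
        (sSup (relaxedHPDSet (μ : Measure ↥Θ') ρ α (β / max 1 (K : ℝ)))) θ
        ∂(μ : Measure ↥Θ') = 1 - α) ∧
    (∀ dd : ℝ, 0 ≤ dd →
      LipschitzWith (Real.toNNReal β) (relaxedHPDFn ρ (β / max 1 (K : ℝ)) dd)) := by

  have hΘ'ne : Θ'.Nonempty := nonempty_of_measure_ne_zero hΘ'vol.ne'
  haveI : Nonempty ↥Θ' := hΘ'ne.to_subtype
  haveI : CompactSpace ↥Θ' := isCompact_iff_compactSpace.mp hΘ'c
  set βh := β / max 1 (K : ℝ) with hβh_def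
  have hmax : (0:ℝ) < max 1 (K:ℝ) := lt_of_lt_of_le one_pos (le_max_left _ _)
  have hβh : 0 < βh := div_pos hβ hmax
  have hρc : Continuous ρ := hρLip.continuous
  set ν : Measure ↥Θ' := (μ : Measure ↥Θ') with hν
  set F : ℝ → ℝ := fun dd => ∫ θ, relaxedHPDFn ρ βh dd θ ∂ν with hF
  have hInt : ∀ dd : ℝ, Integrable (relaxedHPDFn ρ βh dd) ν := fun dd =>
    hpd_integrable hρc βh dd ν
  -- F is Lipschitz with constant βh
  have hFlip : ∀ d₁ d₂ : ℝ, |F d₁ - F d₂| ≤ βh * |d₁ - d₂| := by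
    intro d₁ d₂
    have hsub : F d₁ - F d₂ = ∫ θ, (relaxedHPDFn ρ βh d₁ θ - relaxedHPDFn ρ βh d₂ θ) ∂ν :=
      (integral_sub (hInt d₁) (hInt d₂)).symm
    rw [hsub, ← Real.norm_eq_abs]
    have hbd : ∀ θ, ‖relaxedHPDFn ρ βh d₁ θ - relaxedHPDFn ρ βh d₂ θ‖ ≤ βh * |d₁ - d₂| := by
      intro θ
      simp only [relaxedHPDFn, Real.norm_eq_abs]
      calc |min 1 (max 0 (βh * (ρ θ - d₁) + 1)) - min 1 (max 0 (βh * (ρ θ - d₂) + 1))|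
          ≤ |(βh * (ρ θ - d₁) + 1) - (βh * (ρ θ - d₂) + 1)| := clamp_lip _ _
        _ = βh * |d₁ - d₂| := by
            rw [show (βh * (ρ θ - d₁) + 1) - (βh * (ρ θ - d₂) + 1) = βh * (d₂ - d₁) by ring,
              abs_mul, abs_of_pos hβh, abs_sub_comm]
    calc ‖∫ θ, (relaxedHPDFn ρ βh d₁ θ - relaxedHPDFn ρ βh d₂ θ) ∂ν‖
        ≤ βh * |d₁ - d₂| * (ν Set.univ).toReal :=
          norm_integral_le_of_norm_le_const (Filter.Eventually.of_forall hbd)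
      _ = βh * |d₁ - d₂| := by simp
  have hFcont : Continuous F := by
    have : LipschitzWith (Real.toNNReal βh) F := by
      refine LipschitzWith.of_dist_le_mul fun x y => ?_
      rw [Real.dist_eq, Real.dist_eq, Real.coe_toNNReal _ hβh.le]
      exact hFlip x y
    exact this.continuous
  -- ρ ≥ 0 a.e.
  have hmeasρ : Measurable ρ := hρc.measurable
  have hρ_ae : ∀ᵐ θ ∂ν, 0 ≤ ρ θ := by
    have hset : MeasurableSet {θ : ↥Θ' | ρ θ < 0} := measurableSet_lt hmeasρ measurable_const
    have : ν {θ | ρ θ < 0} = 0 := by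
      rw [hdens, withDensity_apply _ hset]
      have hz : ∀ᵐ θ ∂(lebOn Θ'), θ ∈ {θ : ↥Θ' | ρ θ < 0} → ENNReal.ofReal (ρ θ) = 0 :=
        Filter.Eventually.of_forall fun θ hθ => ENNReal.ofReal_eq_zero.mpr (le_of_lt hθ)
      calc ∫⁻ θ in {θ : ↥Θ' | ρ θ < 0}, ENNReal.ofReal (ρ θ) ∂(lebOn Θ')
          = ∫⁻ _θ in {θ : ↥Θ' | ρ θ < 0}, 0 ∂(lebOn Θ') := setLIntegral_congr_fun hset (fun θ hθ => ENNReal.ofReal_eq_zero.mpr (le_of_lt hθ))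
        _ = 0 := by simp
    filter_upwards [measure_eq_zero_iff_ae_notMem.mp this] with θ hθ
    simpa using hθ
  -- F 0 = 1
  have hF0 : F 0 = 1 := by
    have : F 0 = ∫ _θ, (1:ℝ) ∂ν := by
      refine integral_congr_ae ?_
      filter_upwards [hρ_ae] with θ hθ
      simp only [relaxedHPDFn, sub_zero]
      have h1 : (1:ℝ) ≤ βh * ρ θ + 1 := by nlinarith
      rw [max_eq_right (le_trans zero_le_one h1), min_eq_left h1]
    rw [this]; simp
  have hne : (relaxedHPDSet ν ρ α βh).Nonempty := by
    refine ⟨0, le_refl 0, ?_⟩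
    show 1 - α ≤ F 0
    rw [hF0]; linarith [hα.1]
  -- bound on ρ
  obtain ⟨θ₀, -, hθ₀⟩ := isCompact_univ.exists_isMaxOn Set.univ_nonempty hρc.continuousOn
  set M := ρ θ₀ with hM
  have hMbd : ∀ θ, ρ θ ≤ M := fun θ => hθ₀ (Set.mem_univ θ)
  have hFzero : ∀ dd : ℝ, M + βh⁻¹ < dd → F dd = 0 := by
    intro dd hdd
    have : F dd = ∫ _θ, (0:ℝ) ∂ν := by
      refine integral_congr_ae (Filter.Eventually.of_forall fun θ => ?_)
      simp only [relaxedHPDFn]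
      have h1 : βh * (ρ θ - dd) + 1 ≤ 0 := by
        have h2 : ρ θ - dd < -βh⁻¹ := by linarith [hMbd θ]
        have := (mul_lt_mul_iff_right₀ hβh).mpr h2
        rw [mul_neg, mul_inv_cancel₀ hβh.ne'] at this
        linarith
      rw [max_eq_left h1, min_eq_right zero_le_one]
    rw [this]; simp
  have hbdd : BddAbove (relaxedHPDSet ν ρ α βh) := by
    refine ⟨M + βh⁻¹, fun dd hdd => ?_⟩
    by_contra hlt
    push_neg at hlt
    have := hFzero dd hlt
    have h2 : 1 - α ≤ F dd := hdd.2
    rw [this] at h2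
    linarith [hα.2]
  have hclosed : IsClosed (relaxedHPDSet ν ρ α βh) := by
    have : relaxedHPDSet ν ρ α βh = Set.Ici 0 ∩ F ⁻¹' Set.Ici (1 - α) := by
      ext dd; simp [relaxedHPDSet, Set.mem_Ici, and_comm, hF]
    rw [this]
    exact isClosed_Ici.inter (IsClosed.preimage hFcont isClosed_Ici)
  have hmem : sSup (relaxedHPDSet ν ρ α βh) ∈ relaxedHPDSet ν ρ α βh :=
    hclosed.csSup_mem hne hbdd
  set ds := sSup (relaxedHPDSet ν ρ α βh) with hds
  -- F ds = 1 - α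
  have hFds : F ds = 1 - α := by
    refine le_antisymm ?_ hmem.2
    refine le_of_forall_pos_le_add fun ε hε => ?_
    set ε' := ε / βh with hε'def
    have hε' : 0 < ε' := div_pos hε hβh
    have hnotmem : ds + ε' ∉ relaxedHPDSet ν ρ α βh := fun h =>
      absurd (le_csSup hbdd h) (by linarith)
    have hFlt : F (ds + ε') < 1 - α := by
      by_contra h
      push_neg at h
      exact hnotmem ⟨by linarith [hmem.1], h⟩
    have := hFlip ds (ds + ε')
    have habs : |ds - (ds + ε')| = ε' := by rw [show ds - (ds + ε') = -ε' by ring, abs_neg, abs_of_pos hε']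
    rw [habs] at this
    have hmul : βh * ε' = ε := by rw [hε'def, mul_comm, div_mul_cancel₀ ε hβh.ne']
    rw [hmul] at this
    have := abs_sub_le_iff.mp this
    linarith [this.1]
  -- Lipschitz of f_dd
  have hLip : ∀ dd : ℝ, 0 ≤ dd → LipschitzWith (Real.toNNReal β) (relaxedHPDFn ρ βh dd) := by
    intro dd _
    refine LipschitzWith.of_dist_le_mul fun x y => ?_
    rw [Real.coe_toNNReal _ hβ.le, Real.dist_eq]
    simp only [relaxedHPDFn]
    calc |min 1 (max 0 (βh * (ρ x - dd) + 1)) - min 1 (max 0 (βh * (ρ y - dd) + 1))|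
        ≤ |(βh * (ρ x - dd) + 1) - (βh * (ρ y - dd) + 1)| := clamp_lip _ _
      _ = βh * |ρ x - ρ y| := by
          rw [show (βh * (ρ x - dd) + 1) - (βh * (ρ y - dd) + 1) = βh * (ρ x - ρ y) by ring,
            abs_mul, abs_of_pos hβh]
      _ ≤ βh * ((K : ℝ) * dist x y) := by
          refine mul_le_mul_of_nonneg_left ?_ hβh.le
          have := hρLip.dist_le_mul x y
          rwa [Real.dist_eq] at this
      _ ≤ β * dist x y := by
          have hK : (K:ℝ) ≤ max 1 (K:ℝ) := le_max_right _ _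
          have hd : (0:ℝ) ≤ dist x y := dist_nonneg
          rw [hβh_def, div_mul_eq_mul_div, div_le_iff₀ hmax]
          nlinarith [mul_le_mul_of_nonneg_left hK (mul_nonneg hβ.le hd)]
  exact ⟨hne, hbdd, hmem, hFds, hLip⟩
end

section
/- Let Θ ⊆ ℝ^d be compact, α, η ∈ (0,1), δ ∈ (0,α), and β, C, γ > 0 with F′ := δη − βCγ > 0. Let p : [δη, δ] → ℝ≥0 be a continuous probability density (i.e. ∫_{[δη,δ]} p(z) dz = 1). Let ν, ν′ be Borel probability measures on Θ with W1(ν, ν′) ≤ Cγ, and for each z ∈ [δη, δ] let ψ_z : Θ → [0,1] be β-Lipschitz, jointly measurable in (z,θ), with ∫_Θ ψ_z dν′ = 1 − (α − z). Then ∫_Θ ( ∫_{[δη,δ]} ψ_z(θ) p(z) dz ) ν(dθ) ≥ 1 − α + F′ > 1 − α. -/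
open MeasureTheory

/-- The Wasserstein-1 distance between two measures, via Kantorovich–Rubinstein duality. -/
noncomputable def W1 {T : Type*} [MeasurableSpace T] [PseudoMetricSpace T]
    (μ ν : Measure T) : ℝ :=
  sSup { r : ℝ | ∃ f : T → ℝ, LipschitzWith 1 f ∧
    r = |(∫ t, f t ∂μ) - ∫ t, f t ∂ν| }

/-- the perturbed acceptance probability function has credibility at least
`1 − α + F'` where `F' = δη − βCγ > 0`.  Here `ν` and `ν'` are two priors/posteriors at
`W1`-distance at most `Cγ`, each `ψ_z` is a `β`-Lipschitz acceptance function of a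
`1−(α−z)` credible region under `ν'`, and `p` is a continuous probability density on
`[δη, δ]`. -/
theorem perturbed_acceptance_credibility_lower_bound
    {d : ℕ} (Θ : Set (EuclideanSpace ℝ (Fin d))) (hΘ : IsCompact Θ)
    (α η δ β C γ : ℝ)
    (hα : α ∈ Set.Ioo (0:ℝ) 1) (hη : η ∈ Set.Ioo (0:ℝ) 1) (hδ : δ ∈ Set.Ioo 0 α)
    (hβ : 0 < β) (hC : 0 < C) (hγ : 0 < γ)
    (hF : 0 < δ * η - β * C * γ)
    (p : ℝ → ℝ)
    (hp0 : ∀ z ∈ Set.Icc (δ * η) δ, 0 ≤ p z)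
    (hpc : ContinuousOn p (Set.Icc (δ * η) δ))
    (hpint : ∫ z in Set.Icc (δ * η) δ, p z = 1)
    (ν ν' : ProbabilityMeasure ↥Θ)
    (hW : W1 (ν : Measure ↥Θ) (ν' : Measure ↥Θ) ≤ C * γ)
    (ψ : ℝ → ↥Θ → ℝ)
    (hψ01 : ∀ z θ, ψ z θ ∈ Set.Icc (0:ℝ) 1)
    (hψLip : ∀ z ∈ Set.Icc (δ * η) δ, LipschitzWith (Real.toNNReal β) (ψ z))
    (hψmeas : Measurable fun zθ : ℝ × ↥Θ => ψ zθ.1 zθ.2)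
    (hψcred : ∀ z ∈ Set.Icc (δ * η) δ,
      ∫ θ, ψ z θ ∂(ν' : Measure ↥Θ) = 1 - (α - z)) :
    1 - α < 1 - α + (δ * η - β * C * γ) ∧
    1 - α + (δ * η - β * C * γ) ≤
      ∫ θ, (∫ z in Set.Icc (δ * η) δ, ψ z θ * p z) ∂(ν : Measure ↥Θ) := by
  classical
  refine ⟨by linarith, ?_⟩
  have hcs : CompactSpace ↥Θ := isCompact_iff_compactSpace.mp hΘ
  have hne : Nonempty ↥Θ := by
    by_contra h
    have h0 : (ν : Measure ↥Θ) Set.univ = 1 := measure_univ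
    rw [Set.univ_eq_empty_iff.mpr (not_nonempty_iff.mp h), measure_empty] at h0
    exact zero_ne_one h0
  obtain ⟨θ0⟩ := hne
  set I := Set.Icc (δ * η) δ with hIdef
  have hImeas : MeasurableSet I := measurableSet_Icc
  have hIcpt : IsCompact I := isCompact_Icc
  -- measurability and integrability of each ψ z
  have hψm : ∀ z, Measurable (ψ z) := fun z => hψmeas.comp measurable_prodMk_left
  have hψint : ∀ z (μ : ProbabilityMeasure ↥Θ),
      Integrable (ψ z) (μ : Measure ↥Θ) := by
    intro z μ
    refine (integrable_const (1 : ℝ)).mono' (hψm z).aestronglyMeasurable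
      (ae_of_all _ fun θ => ?_)
    rw [Real.norm_eq_abs, abs_le]
    exact ⟨by linarith [(hψ01 z θ).1], (hψ01 z θ).2⟩
  -- boundedness of the space
  have hbd : Bornology.IsBounded (Set.univ : Set ↥Θ) := isCompact_univ.isBounded
  set D := Metric.diam (Set.univ : Set ↥Θ) with hD
  have hdist : ∀ x y : ↥Θ, dist x y ≤ D := fun x y =>
    Metric.dist_le_diam_of_mem hbd trivial trivial
  -- for any 1-Lipschitz f and probability measure μ, |∫ f - f θ0| ≤ D
  have key : ∀ (f : ↥Θ → ℝ), LipschitzWith 1 f → ∀ (μ : ProbabilityMeasure ↥Θ),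
      |(∫ t, f t ∂(μ : Measure ↥Θ)) - f θ0| ≤ D := by
    intro f hf μ
    have hb : ∀ t, ‖f t - f θ0‖ ≤ D := by
      intro t
      have h1 := hf.dist_le_mul t θ0
      simp only [NNReal.coe_one, one_mul, Real.dist_eq] at h1
      simpa [Real.norm_eq_abs] using h1.trans (hdist t θ0)
    have hint : Integrable f (μ : Measure ↥Θ) := by
      refine (integrable_const (|f θ0| + D)).mono'
        hf.continuous.measurable.aestronglyMeasurable (ae_of_all _ fun t => ?_)
      have h2 := hb t
      rw [Real.norm_eq_abs] at h2 ⊢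
      have h3 : |f t| - |f θ0| ≤ |f t - f θ0| := abs_sub_abs_le_abs_sub _ _
      linarith
    have h4 : (∫ t, f t ∂(μ : Measure ↥Θ)) - f θ0
        = ∫ t, (f t - f θ0) ∂(μ : Measure ↥Θ) := by
      rw [integral_sub hint (integrable_const _), integral_const]
      simp
    rw [h4]
    calc |∫ t, (f t - f θ0) ∂(μ : Measure ↥Θ)|
        ≤ ∫ _, D ∂(μ : Measure ↥Θ) := by
          refine norm_integral_le_of_norm_le (integrable_const D) (ae_of_all _ hb)
      _ = D := by simp
  -- the W1 set is bounded above
  have hBdd : BddAbove { r : ℝ | ∃ f : ↥Θ → ℝ, LipschitzWith 1 f ∧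
      r = |(∫ t, f t ∂(ν : Measure ↥Θ)) - ∫ t, f t ∂(ν' : Measure ↥Θ)| } := by
    refine ⟨2 * D, fun r hr => ?_⟩
    obtain ⟨f, hf, rfl⟩ := hr
    have h1 := key f hf ν
    have h2 := key f hf ν'
    have h3 : |(∫ t, f t ∂(ν : Measure ↥Θ)) - ∫ t, f t ∂(ν' : Measure ↥Θ)|
        ≤ |(∫ t, f t ∂(ν : Measure ↥Θ)) - f θ0|
          + |(∫ t, f t ∂(ν' : Measure ↥Θ)) - f θ0| := by
      have := abs_sub_le (∫ t, f t ∂(ν : Measure ↥Θ)) (f θ0)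
        (∫ t, f t ∂(ν' : Measure ↥Θ))
      rwa [abs_sub_comm (f θ0)] at this
    linarith
  -- Kantorovich–Rubinstein bound for each ψ z
  have hW1 : ∀ z ∈ I, |(∫ θ, ψ z θ ∂(ν : Measure ↥Θ))
      - ∫ θ, ψ z θ ∂(ν' : Measure ↥Θ)| ≤ β * (C * γ) := by
    intro z hz
    set g : ↥Θ → ℝ := fun θ => β⁻¹ * ψ z θ with hg
    have hψd : ∀ x y : ↥Θ, |ψ z x - ψ z y| ≤ β * dist x y := by
      intro x y
      have h1 := (hψLip z hz).dist_le_mul x y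
      rwa [Real.dist_eq, Real.coe_toNNReal β hβ.le] at h1
    have hgLip : LipschitzWith 1 g := by
      refine LipschitzWith.of_dist_le_mul fun x y => ?_
      rw [NNReal.coe_one, one_mul, Real.dist_eq]
      calc |g x - g y| = β⁻¹ * |ψ z x - ψ z y| := by
            rw [hg, ← mul_sub, abs_mul, abs_of_nonneg (inv_nonneg.mpr hβ.le)]
        _ ≤ β⁻¹ * (β * dist x y) :=
            mul_le_mul_of_nonneg_left (hψd x y) (inv_nonneg.mpr hβ.le)
        _ = dist x y := by field_simp
    have hmem : |(∫ t, g t ∂(ν : Measure ↥Θ)) - ∫ t, g t ∂(ν' : Measure ↥Θ)|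
        ∈ { r : ℝ | ∃ f : ↥Θ → ℝ, LipschitzWith 1 f ∧
          r = |(∫ t, f t ∂(ν : Measure ↥Θ)) - ∫ t, f t ∂(ν' : Measure ↥Θ)| } :=
      ⟨g, hgLip, rfl⟩
    have hle : |(∫ t, g t ∂(ν : Measure ↥Θ)) - ∫ t, g t ∂(ν' : Measure ↥Θ)|
        ≤ C * γ := (le_csSup hBdd hmem).trans hW
    have hgi : ∀ (μ : ProbabilityMeasure ↥Θ),
        (∫ t, g t ∂(μ : Measure ↥Θ)) = β⁻¹ * ∫ θ, ψ z θ ∂(μ : Measure ↥Θ) := by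
      intro μ
      simp only [hg, integral_const_mul]
    rw [hgi ν, hgi ν', ← mul_sub, abs_mul, abs_of_nonneg (inv_nonneg.mpr hβ.le)] at hle
    calc |(∫ θ, ψ z θ ∂(ν : Measure ↥Θ)) - ∫ θ, ψ z θ ∂(ν' : Measure ↥Θ)|
        = β * (β⁻¹ * |(∫ θ, ψ z θ ∂(ν : Measure ↥Θ))
            - ∫ θ, ψ z θ ∂(ν' : Measure ↥Θ)|) := by field_simp
      _ ≤ β * (C * γ) := mul_le_mul_of_nonneg_left hle hβ.le
  -- lower bound on ∫ ψ z dν for z ∈ I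
  have hlow : ∀ z ∈ I, 1 - α + (δ * η - β * C * γ)
      ≤ ∫ θ, ψ z θ ∂(ν : Measure ↥Θ) := by
    intro z hz
    have h1 := (abs_le.mp (hW1 z hz)).1
    have h2 := hψcred z hz
    have h3 : δ * η ≤ z := hz.1
    have h4 : β * (C * γ) = β * C * γ := (mul_assoc β C γ).symm
    linarith
  -- bound on p
  obtain ⟨K, hK⟩ := hIcpt.exists_bound_of_continuousOn hpc
  -- integrability on the product space (I × Θ)
  have hpae : AEStronglyMeasurable p (volume.restrict I) :=
    (hpc.aemeasurable hImeas).aestronglyMeasurable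
  have hGmeas : AEStronglyMeasurable (fun q : ℝ × ↥Θ => ψ q.1 q.2 * p q.1)
      ((volume.restrict I).prod (ν : Measure ↥Θ)) :=
    hψmeas.aestronglyMeasurable.mul hpae.comp_fst
  have haeI : ∀ᵐ q : ℝ × ↥Θ ∂((volume.restrict I).prod (ν : Measure ↥Θ)),
      q.1 ∈ I := by
    have : ((volume.restrict I).prod (ν : Measure ↥Θ))
        = ((volume.restrict I).prod ((ν : Measure ↥Θ).restrict Set.univ)) := by
      rw [Measure.restrict_univ]
    rw [this, Measure.prod_restrict]
    exact (ae_restrict_mem (hImeas.prod MeasurableSet.univ)).mono fun q hq => hq.1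
  have hG2 : Integrable (fun q : ℝ × ↥Θ => ψ q.1 q.2 * p q.1)
      ((volume.restrict I).prod (ν : Measure ↥Θ)) := by
    refine (integrable_const K).mono' hGmeas (haeI.mono fun q hq => ?_)
    rw [Real.norm_eq_abs, abs_mul]
    have h1 : |ψ q.1 q.2| ≤ 1 := by
      rw [abs_le]; exact ⟨by linarith [(hψ01 q.1 q.2).1], (hψ01 q.1 q.2).2⟩
    have h2 : |p q.1| ≤ K := by
      have := hK q.1 hq; rwa [Real.norm_eq_abs] at this
    have h3 : (0:ℝ) ≤ |p q.1| := abs_nonneg _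
    nlinarith
  have hG : Integrable (Function.uncurry fun (θ : ↥Θ) (z : ℝ) => ψ z θ * p z)
      ((ν : Measure ↥Θ).prod (volume.restrict I)) := hG2.swap
  -- Fubini swap
  have hswap : (∫ θ, (∫ z in I, ψ z θ * p z) ∂(ν : Measure ↥Θ))
      = ∫ z in I, (∫ θ, ψ z θ * p z ∂(ν : Measure ↥Θ)) :=
    integral_integral_swap hG
  -- integrand after swap
  have hinner : ∀ z : ℝ, (∫ θ, ψ z θ * p z ∂(ν : Measure ↥Θ))
      = (∫ θ, ψ z θ ∂(ν : Measure ↥Θ)) * p z := fun z =>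
    integral_mul_const (p z) (ψ z)
  -- integrability of the two z-integrands on I
  have hpInt : IntegrableOn p I := by
    exact hpc.integrableOn_Icc
  have hRHSint : IntegrableOn (fun z => (∫ θ, ψ z θ ∂(ν : Measure ↥Θ)) * p z) I := by
    have := hG2.integral_prod_left
    simpa [hinner, IntegrableOn] using this
  have hLHSint : IntegrableOn
      (fun z => (1 - α + (δ * η - β * C * γ)) * p z) I :=
    hpInt.const_mul _
  have hmono : (∫ z in I, (1 - α + (δ * η - β * C * γ)) * p z)
      ≤ ∫ z in I, (∫ θ, ψ z θ ∂(ν : Measure ↥Θ)) * p z := by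
    refine setIntegral_mono_on hLHSint hRHSint hImeas fun z hz => ?_
    exact mul_le_mul_of_nonneg_right (hlow z hz) (hp0 z hz)
  have hconst : (∫ z in I, (1 - α + (δ * η - β * C * γ)) * p z)
      = 1 - α + (δ * η - β * C * γ) := by
    rw [integral_const_mul, hpint, mul_one]
  calc 1 - α + (δ * η - β * C * γ)
      = ∫ z in I, (1 - α + (δ * η - β * C * γ)) * p z := hconst.symm
    _ ≤ ∫ z in I, (∫ θ, ψ z θ ∂(ν : Measure ↥Θ)) * p z := hmono
    _ = ∫ z in I, (∫ θ, ψ z θ * p z ∂(ν : Measure ↥Θ)) := by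
        simp only [hinner]
    _ = ∫ θ, (∫ z in I, ψ z θ * p z) ∂(ν : Measure ↥Θ) := hswap.symm
end

section
/- Let (Ω, F, μ) be a probability space and g : Ω → [0,1] measurable. Define L(r) = ∫ max(0, g − r) dμ for r ≥ 0. Then: (i) |L(r₂) − L(r₁)| ≤ |r₂ − r₁| for all 0 < r₁ < r₂ < ∞, so L is 1-Lipschitz; (ii) L is monotone nonincreasing; and (iii) for all 0 ≤ r ≤ 1 and all 0 < c ≤ 1 − r, (L(r) − L(r+c))/c ≥ L(r). -/
open MeasureTheory

/-- properties of the credibility function `L(r) = ∫ max(0, g − r) dμ` for a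
measurable `g : Ω → [0,1]` on a probability space: (i) `L` is 1-Lipschitz on `(0,∞)`;
(ii) `L` is monotone nonincreasing on `[0,∞)`; (iii) the difference quotient bound
`(L(r) − L(r+c))/c ≥ L(r)` for `0 ≤ r ≤ 1` and `0 < c ≤ 1 − r`. -/
theorem credibility_function_lipschitz_monotone
    {Ω : Type*} [MeasurableSpace Ω] (μ : Measure Ω) [IsProbabilityMeasure μ]
    (g : Ω → ℝ) (hgmeas : Measurable g) (hg01 : ∀ ω, g ω ∈ Set.Icc (0:ℝ) 1) :
    (∀ r₁ r₂ : ℝ, 0 < r₁ → r₁ < r₂ →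
      |(∫ ω, max 0 (g ω - r₂) ∂μ) - ∫ ω, max 0 (g ω - r₁) ∂μ| ≤ |r₂ - r₁|) ∧
    AntitoneOn (fun r : ℝ => ∫ ω, max 0 (g ω - r) ∂μ) (Set.Ici (0:ℝ)) ∧
    (∀ r c : ℝ, 0 ≤ r → r ≤ 1 → 0 < c → c ≤ 1 - r →
      (∫ ω, max 0 (g ω - r) ∂μ) ≤
        ((∫ ω, max 0 (g ω - r) ∂μ) - ∫ ω, max 0 (g ω - (r + c)) ∂μ) / c) := by
  have hint : ∀ r : ℝ, Integrable (fun ω => max 0 (g ω - r)) μ := by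
    intro r
    refine Integrable.mono' (integrable_const (max 0 (1 - r)))
      ((measurable_const.max (hgmeas.sub measurable_const)).aestronglyMeasurable) ?_
    filter_upwards with ω
    rw [Real.norm_eq_abs, abs_of_nonneg (le_max_left _ _)]
    exact max_le_max le_rfl (by linarith [(hg01 ω).2])
  refine ⟨?_, ?_, ?_⟩
  · intro r₁ r₂ _ _
    rw [← integral_sub (hint r₂) (hint r₁)]
    have := norm_integral_le_of_norm_le_const (μ := μ)
      (f := fun ω => max 0 (g ω - r₂) - max 0 (g ω - r₁)) (C := |r₂ - r₁|) ?_
    · simpa [measure_univ] using this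
    · filter_upwards with ω
      rw [Real.norm_eq_abs]
      calc |max 0 (g ω - r₂) - max 0 (g ω - r₁)|
          ≤ max |0 - 0| |(g ω - r₂) - (g ω - r₁)| := abs_max_sub_max_le_max _ _ _ _
        _ ≤ |r₂ - r₁| := by
            simp only [sub_sub_sub_cancel_left, sub_zero, abs_zero, abs_neg]
            simp [abs_sub_comm]
  · intro r₁ _ r₂ _ h
    exact integral_mono (hint r₂) (hint r₁)
      (fun ω => max_le_max le_rfl (by linarith))
  · intro r c hr hr1 hc hc1
    rw [le_div_iff₀ hc]
    have key : (∫ ω, max 0 (g ω - (r + c)) ∂μ) ≤ (1 - c) * ∫ ω, max 0 (g ω - r) ∂μ := by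
      rw [← integral_const_mul]
      refine integral_mono (hint _) ((hint r).const_mul _) (fun ω => ?_)
      rcases le_or_gt (g ω) (r + c) with h | h
      · rw [max_eq_left (by linarith)]
        exact mul_nonneg (by linarith) (le_max_left _ _)
      · rw [max_eq_right (by linarith), max_eq_right (by linarith)]
        nlinarith [(hg01 ω).2]
    nlinarith
end

section
/- Let (Ω, F, μ) be a probability space, α ∈ (0,1), F′ > 0, and g : Ω → [0,1] measurable with ∫ g dμ ≥ 1 − α + F′. Define L(r) = ∫ max(0, g − r) dμ and R = sup{ r ∈ [0,1] : L(r) ≥ 1 − α }. Then R ∈ [0, α] and ∫ max(0, g − R) dμ = 1 − α; that is, the corrected function max(0, g − R) is an acceptance probability function of a 1−α credible region under μ. -/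
open MeasureTheory

/-- exactness of the corrected acceptance function.  If `g : Ω → [0,1]` has
`∫ g dμ ≥ 1 − α + F'` with `F' > 0`, and `R = sup{r ∈ [0,1] : ∫ max(0, g − r) dμ ≥ 1 − α}`,
then `R ∈ [0,α]` and `∫ max(0, g − R) dμ = 1 − α`. -/
theorem corrected_acceptance_exact_level
    {Ω : Type*} [MeasurableSpace Ω] (μ : Measure Ω) [IsProbabilityMeasure μ]
    (α F' : ℝ) (hα : α ∈ Set.Ioo (0:ℝ) 1) (hF' : 0 < F')
    (g : Ω → ℝ) (hgmeas : Measurable g) (hg01 : ∀ ω, g ω ∈ Set.Icc (0:ℝ) 1)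
    (hcred : 1 - α + F' ≤ ∫ ω, g ω ∂μ) :
    sSup {r : ℝ | r ∈ Set.Icc (0:ℝ) 1 ∧ 1 - α ≤ ∫ ω, max 0 (g ω - r) ∂μ} ∈
      Set.Icc (0:ℝ) α ∧
    ∫ ω, max 0 (g ω -
        sSup {r : ℝ | r ∈ Set.Icc (0:ℝ) 1 ∧ 1 - α ≤ ∫ ω', max 0 (g ω' - r) ∂μ}) ∂μ
      = 1 - α := by
  obtain ⟨hα0, hα1⟩ := hα
  set S : Set ℝ :=
    {r : ℝ | r ∈ Set.Icc (0:ℝ) 1 ∧ 1 - α ≤ ∫ ω, max 0 (g ω - r) ∂μ} with hSdef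
  have hint : ∀ r : ℝ, Integrable (fun ω => max 0 (g ω - r)) μ := by
    intro r
    refine (integrable_const (1 + |r|)).mono' ?_ ?_
    · exact (measurable_const.max (hgmeas.sub measurable_const)).aestronglyMeasurable
    · refine Filter.Eventually.of_forall fun ω => ?_
      have h1 := (hg01 ω).2
      have h2 := neg_abs_le r
      have h3 := abs_nonneg r
      have habs : |max 0 (g ω - r)| = max 0 (g ω - r) :=
        abs_of_nonneg (le_max_left 0 (g ω - r))
      rw [Real.norm_eq_abs, habs, max_le_iff]
      constructor <;> linarith
  have hlip : ∀ r s : ℝ,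
      |(∫ ω, max 0 (g ω - r) ∂μ) - ∫ ω, max 0 (g ω - s) ∂μ| ≤ |r - s| := by
    intro r s
    rw [← integral_sub (hint r) (hint s)]
    calc |∫ ω, (max 0 (g ω - r) - max 0 (g ω - s)) ∂μ|
        ≤ ∫ ω, |max 0 (g ω - r) - max 0 (g ω - s)| ∂μ := by
          simpa [Real.norm_eq_abs] using
            norm_integral_le_integral_norm (fun ω => max 0 (g ω - r) - max 0 (g ω - s)) (μ := μ)
      _ ≤ ∫ _ω, |r - s| ∂μ := by
          refine integral_mono ((hint r).sub (hint s)).abs (integrable_const _) fun ω => ?_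
          have h := abs_max_sub_max_le_abs (g ω - r) (g ω - s) 0
          have h2 : (g ω - r) - (g ω - s) = s - r := by ring
          rw [h2] at h
          calc |max 0 (g ω - r) - max 0 (g ω - s)|
              = |max (g ω - r) 0 - max (g ω - s) 0| := by rw [max_comm, max_comm (g ω - s)]
            _ ≤ |s - r| := h
            _ = |r - s| := abs_sub_comm _ _
      _ = |r - s| := by simp
  have hcont : Continuous (fun r : ℝ => ∫ ω, max 0 (g ω - r) ∂μ) := by
    refine (LipschitzWith.of_dist_le_mul (K := 1) fun r s => ?_).continuous
    rw [NNReal.coe_one, one_mul, Real.dist_eq, Real.dist_eq]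
    exact hlip r s
  have hSclosed : IsClosed S := by
    have : S = Set.Icc (0:ℝ) 1 ∩
        (fun r : ℝ => ∫ ω, max 0 (g ω - r) ∂μ) ⁻¹' Set.Ici (1 - α) := rfl
    rw [this]
    exact isClosed_Icc.inter (isClosed_Ici.preimage hcont)
  have h0S : (0:ℝ) ∈ S := by
    have h0 : ∫ ω, max 0 (g ω - 0) ∂μ = ∫ ω, g ω ∂μ := by
      refine integral_congr_ae (Filter.Eventually.of_forall fun ω => ?_)
      simp [max_eq_right (hg01 ω).1]
    refine ⟨⟨le_refl _, zero_le_one⟩, ?_⟩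
    rw [h0]
    linarith
  have hbdd : BddAbove S := ⟨1, fun r hr => hr.1.2⟩
  have hRmem : sSup S ∈ S := hSclosed.csSup_mem ⟨0, h0S⟩ hbdd
  set R := sSup S with hRdef
  have hR0 : 0 ≤ R := hRmem.1.1
  have hR1 : R ≤ 1 := hRmem.1.2
  have hLR : 1 - α ≤ ∫ ω, max 0 (g ω - R) ∂μ := hRmem.2
  have hRα : R ≤ α := by
    have hub : ∫ ω, max 0 (g ω - R) ∂μ ≤ ∫ _ω, (1 - R) ∂μ := by
      refine integral_mono (hint R) (integrable_const _) fun ω => ?_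
      rw [max_le_iff]
      exact ⟨by linarith, by linarith [(hg01 ω).2]⟩
    rw [integral_const] at hub
    simp at hub
    linarith
  have hexact : ∫ ω, max 0 (g ω - R) ∂μ = 1 - α := by
    by_contra hne
    have hlt : 1 - α < ∫ ω, max 0 (g ω - R) ∂μ := lt_of_le_of_ne hLR (Ne.symm hne)
    set ε : ℝ := (∫ ω, max 0 (g ω - R) ∂μ) - (1 - α) with hεdef
    have hεpos : 0 < ε := by linarith
    set r : ℝ := min 1 (R + ε) with hrdef
    have hrR : R < r := lt_min (lt_of_le_of_lt hRα hα1) (by linarith)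
    have hrS : r ∈ S := by
      refine ⟨⟨le_trans hR0 hrR.le, min_le_left _ _⟩, ?_⟩
      have h := hlip R r
      have habs : |R - r| = r - R := by
        rw [abs_sub_comm]; exact abs_of_nonneg (by linarith)
      rw [habs] at h
      have hrRε : r - R ≤ ε := by
        have := min_le_right 1 (R + ε)
        linarith
      have := abs_le.mp h
      linarith [this.1]
    have : r ≤ R := le_csSup hbdd hrS
    linarith
  exact ⟨⟨hR0, hRα⟩, hexact⟩
end

section
/- Let Θ ⊆ ℝ^d be compact, X a metric space, α ∈ (0,1), β > 0, F′ > 0, and C > 0. Let Post : X × P(Θ) → P(Θ) be C-Lipschitz from (X × P(Θ), d_X + W1) to (P(Θ), W1). Let ψ̃ : X × P(Θ) → C(Θ,[0,1]) be continuous into the sup-norm, with ψ̃(x,π) β-Lipschitz on Θ for every (x,π), and suppose ∫_Θ ψ̃(x,π) dPost(x,π) ≥ 1 − α + F′ for all (x,π). Define L_{x,π}(r) = ∫_Θ max(0, ψ̃(x,π) − r) dPost(x,π), R(x,π) = sup{ r ∈ [0,1] : L_{x,π}(r) ≥ 1 − α }, and ψ(x,π) = max(0, ψ̃(x,π) − R(x,π)).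 Then (x,π) ↦ R(x,π) is continuous from (X × P(Θ), d_X + W1) to [0,1], and (x,π) ↦ ψ(x,π) is continuous from (X × P(Θ), d_X + W1) to (C(Θ,[0,1]), sup-norm). In particular, for every θ ∈ Θ, the map (x,π) ↦ ψ(x,π)(θ) is jointly continuous on X × P(Θ). -/
open MeasureTheory

/-- The level correction `R(x,π) = sup{r ∈ [0,1] : ∫ max(0, ψ̃(x,π) − r) dPost(x,π) ≥ 1−α}`. -/
noncomputable def Rcorr {T X : Type*} [MeasurableSpace T]
    (Post : X → ProbabilityMeasure T → ProbabilityMeasure T)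
    (ψt : X → ProbabilityMeasure T → T → ℝ) (α : ℝ)
    (x : X) (π : ProbabilityMeasure T) : ℝ :=
  sSup {r : ℝ | r ∈ Set.Icc (0:ℝ) 1 ∧
    1 - α ≤ ∫ θ, max 0 (ψt x π θ - r) ∂(Post x π : Measure T)}

set_option linter.unusedSectionVars false

section helpers
variable {T : Type*} [MeasurableSpace T] [MetricSpace T] [CompactSpace T] [OpensMeasurableSpace T]

lemma contInt (μ : Measure T) [IsFiniteMeasure μ] {f : T → ℝ} (hf : Continuous f) :
    Integrable f μ :=
  hf.integrable_of_hasCompactSupport (HasCompactSupport.of_compactSpace f)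

lemma W1_bddAbove [Nonempty T] (μ ν : Measure T) [IsProbabilityMeasure μ] [IsProbabilityMeasure ν] :
    BddAbove { r : ℝ | ∃ f : T → ℝ, LipschitzWith 1 f ∧
      r = |(∫ t, f t ∂μ) - ∫ t, f t ∂ν| } := by
  obtain ⟨D, hD⟩ := Metric.isBounded_iff.mp (isCompact_univ (X := T)).isBounded
  refine ⟨2 * D, ?_⟩
  rintro r ⟨f, hf, rfl⟩
  set t0 : T := Classical.arbitrary T
  have hint : ∀ (κ : Measure T) [IsProbabilityMeasure κ],
      ∫ t, f t ∂κ - f t0 = ∫ t, (f t - f t0) ∂κ := by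
    intro κ hκ
    rw [integral_sub (contInt κ hf.continuous) (integrable_const _), integral_const]
    simp
  have hb : ∀ (κ : Measure T) [IsProbabilityMeasure κ], |∫ t, (f t - f t0) ∂κ| ≤ D := by
    intro κ hκ
    have h1 : |∫ t, (f t - f t0) ∂κ| ≤ ∫ t, |f t - f t0| ∂κ := by
      simpa using norm_integral_le_integral_norm (μ := κ) (f := fun t => f t - f t0)
    have h2 : ∫ t, |f t - f t0| ∂κ ≤ ∫ _t, D ∂κ := by
      refine integral_mono ((contInt κ (hf.continuous.sub continuous_const)).abs)
        (integrable_const _) (fun t => ?_)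
      calc |f t - f t0| ≤ 1 * dist t t0 := by
            simpa [Real.dist_eq] using hf.dist_le_mul t t0
        _ ≤ D := by simpa using hD (Set.mem_univ t) (Set.mem_univ t0)
    simpa using h1.trans h2
  have : ∫ t, f t ∂μ - ∫ t, f t ∂ν
      = (∫ t, (f t - f t0) ∂μ) - ∫ t, (f t - f t0) ∂ν := by
    rw [← hint μ, ← hint ν]; ring
  rw [this]
  calc |(∫ t, (f t - f t0) ∂μ) - ∫ t, (f t - f t0) ∂ν|
      ≤ |∫ t, (f t - f t0) ∂μ| + |∫ t, (f t - f t0) ∂ν| := abs_sub _ _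
    _ ≤ D + D := add_le_add (hb μ) (hb ν)
    _ = 2 * D := by ring

lemma abs_integral_sub_le_W1 [Nonempty T] (μ ν : Measure T) [IsProbabilityMeasure μ]
    [IsProbabilityMeasure ν] {g : T → ℝ} {K : ℝ} (hK : 0 < K)
    (hg : LipschitzWith K.toNNReal g) :
    |(∫ t, g t ∂μ) - ∫ t, g t ∂ν| ≤ K * W1 μ ν := by
  set f : T → ℝ := fun t => K⁻¹ * g t with hfdef
  have hf : LipschitzWith 1 f := by
    refine LipschitzWith.of_dist_le_mul (fun a b => ?_)
    have := hg.dist_le_mul a b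
    rw [Real.dist_eq] at this ⊢
    have h2 : |K⁻¹ * g a - K⁻¹ * g b| = K⁻¹ * |g a - g b| := by
      rw [← mul_sub, abs_mul, abs_of_pos (by positivity)]
    rw [hfdef]
    simp only []
    rw [h2]
    have hKt : (K.toNNReal : ℝ) = K := Real.coe_toNNReal K hK.le
    calc K⁻¹ * |g a - g b| ≤ K⁻¹ * (K * dist a b) := by
          apply mul_le_mul_of_nonneg_left _ (by positivity)
          simpa [hKt] using this
      _ = 1 * dist a b := by field_simp
  have hmem : |(∫ t, f t ∂μ) - ∫ t, f t ∂ν| ∈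
      { r : ℝ | ∃ f : T → ℝ, LipschitzWith 1 f ∧ r = |(∫ t, f t ∂μ) - ∫ t, f t ∂ν| } :=
    ⟨f, hf, rfl⟩
  have hle : |(∫ t, f t ∂μ) - ∫ t, f t ∂ν| ≤ W1 μ ν := le_csSup (W1_bddAbove μ ν) hmem
  have hcalc : ∀ κ : Measure T, ∫ t, f t ∂κ = K⁻¹ * ∫ t, g t ∂κ := by
    intro κ; rw [hfdef]; exact integral_const_mul _ _
  have : |(∫ t, g t ∂μ) - ∫ t, g t ∂ν| = K * |(∫ t, f t ∂μ) - ∫ t, f t ∂ν| := by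
    rw [hcalc, hcalc, ← mul_sub, abs_mul, abs_of_pos (inv_pos.mpr hK), ← mul_assoc]
    field_simp
  rw [this]
  exact mul_le_mul_of_nonneg_left hle hK.le

variable (μ : Measure T) [IsProbabilityMeasure μ] {ψ : T → ℝ}

lemma L_int (hψc : Continuous ψ) (r : ℝ) :
    Integrable (fun θ => max 0 (ψ θ - r)) μ :=
  contInt μ (continuous_const.max (hψc.sub continuous_const))

/-- `L` is antitone. -/
lemma L_anti (hψc : Continuous ψ) : Antitone (fun r => ∫ θ, max 0 (ψ θ - r) ∂μ) := by
  intro r r' h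
  exact integral_mono (L_int μ hψc r') (L_int μ hψc r)
    (fun θ => max_le_max le_rfl (by linarith))

/-- `L` is 1-Lipschitz. -/
lemma L_lip (hψc : Continuous ψ) (r r' : ℝ) :
    |(∫ θ, max 0 (ψ θ - r) ∂μ) - ∫ θ, max 0 (ψ θ - r') ∂μ| ≤ |r - r'| := by
  rw [← integral_sub (L_int μ hψc r) (L_int μ hψc r')]
  have h1 : |∫ θ, (max 0 (ψ θ - r) - max 0 (ψ θ - r')) ∂μ|
      ≤ ∫ θ, |max 0 (ψ θ - r) - max 0 (ψ θ - r')| ∂μ := by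
    simpa using norm_integral_le_integral_norm
      (μ := μ) (f := fun θ => max 0 (ψ θ - r) - max 0 (ψ θ - r'))
  refine h1.trans ?_
  have h2 : ∫ θ, |max 0 (ψ θ - r) - max 0 (ψ θ - r')| ∂μ ≤ ∫ _θ, |r - r'| ∂μ := by
    refine integral_mono (((L_int μ hψc r).sub (L_int μ hψc r')).abs)
      (integrable_const _) (fun θ => ?_)
    have := abs_max_sub_max_le_abs (ψ θ - r) (ψ θ - r') 0
    rw [max_comm 0 (ψ θ - r), max_comm 0 (ψ θ - r')]
    calc |max (ψ θ - r) 0 - max (ψ θ - r') 0| ≤ |(ψ θ - r) - (ψ θ - r')| := this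
      _ = |r' - r| := by ring_nf
      _ = |r - r'| := abs_sub_comm _ _
  simpa using h2

/-- Key convexity-type inequality. -/
lemma L_key (hψc : Continuous ψ) (hψ1 : ∀ θ, ψ θ ≤ 1) {r' r : ℝ} (h0 : 0 ≤ r') (hrr : r' ≤ r) :
    (1 + (r - r')) * ∫ θ, max 0 (ψ θ - r) ∂μ ≤ ∫ θ, max 0 (ψ θ - r') ∂μ := by
  have hint : Integrable (fun θ => (1 + (r - r')) * max 0 (ψ θ - r)) μ :=
    (L_int μ hψc r).const_mul _
  rw [← integral_const_mul]
  refine integral_mono hint (L_int μ hψc r') (fun θ => ?_)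
  rcases le_or_gt (ψ θ) r with h | h
  · have h1 : max 0 (ψ θ - r) = 0 := max_eq_left (by linarith)
    have h2 : 0 ≤ max 0 (ψ θ - r') := le_max_left _ _
    rw [h1]; simpa using h2
  · have h1 : max 0 (ψ θ - r) = ψ θ - r := max_eq_right (by linarith)
    have h2 : max 0 (ψ θ - r') = ψ θ - r' := max_eq_right (by linarith)
    rw [h1, h2]
    nlinarith [hψ1 θ]

/-- `L r ≤ 1 - r` for `r ≤ 1`. -/
lemma L_le (hψc : Continuous ψ) (hψ1 : ∀ θ, ψ θ ≤ 1) {r : ℝ} (hr : r ≤ 1) :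
    ∫ θ, max 0 (ψ θ - r) ∂μ ≤ 1 - r := by
  have : ∫ θ, max 0 (ψ θ - r) ∂μ ≤ ∫ _θ, (1 - r) ∂μ := by
    refine integral_mono (L_int μ hψc r) (integrable_const _) (fun θ => ?_)
    exact max_le (by linarith) (by linarith [hψ1 θ])
  simpa using this

lemma L_zero (hψ0 : ∀ θ, 0 ≤ ψ θ) :
    ∫ θ, max 0 (ψ θ - (0:ℝ)) ∂μ = ∫ θ, ψ θ ∂μ := by
  congr 1; funext θ; rw [sub_zero]; exact max_eq_right (hψ0 θ)

/-- Comparison of the two level functions. -/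
lemma LL_bound [Nonempty T] (μ' : Measure T) [IsProbabilityMeasure μ']
    {ψ' : T → ℝ} {β : ℝ} (hβ : 0 < β) (hψLip : LipschitzWith β.toNNReal ψ)
    (hψ'c : Continuous ψ') {εψ : ℝ}
    (hclose : ∀ θ, |ψ' θ - ψ θ| ≤ εψ) (r : ℝ) :
    |(∫ θ, max 0 (ψ' θ - r) ∂μ') - ∫ θ, max 0 (ψ θ - r) ∂μ| ≤ εψ + β * W1 μ' μ := by
  have hψc := hψLip.continuous
  have h1 : |(∫ θ, max 0 (ψ' θ - r) ∂μ') - ∫ θ, max 0 (ψ θ - r) ∂μ'| ≤ εψ := by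
    rw [← integral_sub (L_int μ' hψ'c r) (L_int μ' hψc r)]
    have ha : |∫ θ, (max 0 (ψ' θ - r) - max 0 (ψ θ - r)) ∂μ'|
        ≤ ∫ θ, |max 0 (ψ' θ - r) - max 0 (ψ θ - r)| ∂μ' := by
      simpa using norm_integral_le_integral_norm
        (μ := μ') (f := fun θ => max 0 (ψ' θ - r) - max 0 (ψ θ - r))
    refine ha.trans ?_
    have hb : ∫ θ, |max 0 (ψ' θ - r) - max 0 (ψ θ - r)| ∂μ' ≤ ∫ _θ, εψ ∂μ' := by
      refine integral_mono (((L_int μ' hψ'c r).sub (L_int μ' hψc r)).abs)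
        (integrable_const _) (fun θ => ?_)
      rw [max_comm 0 (ψ' θ - r), max_comm 0 (ψ θ - r)]
      refine (abs_max_sub_max_le_abs _ _ 0).trans ?_
      calc |(ψ' θ - r) - (ψ θ - r)| = |ψ' θ - ψ θ| := by congr 1; ring
        _ ≤ εψ := hclose θ
    simpa using hb
  have hg : LipschitzWith β.toNNReal (fun θ => max 0 (ψ θ - r)) := by
    have houter : LipschitzWith 1 (fun a : ℝ => max 0 (a - r)) := by
      refine LipschitzWith.of_dist_le_mul (fun a b => ?_)
      rw [Real.dist_eq, Real.dist_eq, max_comm 0 (a - r), max_comm 0 (b - r)]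
      refine (abs_max_sub_max_le_abs _ _ 0).trans ?_
      rw [show (a - r) - (b - r) = a - b by ring]
      simp
    have := houter.comp hψLip
    rwa [one_mul] at this
  have h2 : |(∫ θ, max 0 (ψ θ - r) ∂μ') - ∫ θ, max 0 (ψ θ - r) ∂μ| ≤ β * W1 μ' μ :=
    abs_integral_sub_le_W1 μ' μ hβ hg
  calc |(∫ θ, max 0 (ψ' θ - r) ∂μ') - ∫ θ, max 0 (ψ θ - r) ∂μ|
      ≤ |(∫ θ, max 0 (ψ' θ - r) ∂μ') - ∫ θ, max 0 (ψ θ - r) ∂μ'|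
        + |(∫ θ, max 0 (ψ θ - r) ∂μ') - ∫ θ, max 0 (ψ θ - r) ∂μ| := abs_sub_le _ _ _
    _ ≤ εψ + β * W1 μ' μ := add_le_add h1 h2

end helpers

/-- Abstract comparison of the two corrections. -/
lemma R_compare {α t η : ℝ} (hα : α ∈ Set.Ioo (0:ℝ) 1) (ht : 0 < t)
    {L L' : ℝ → ℝ}
    (hL0 : 1 - α ≤ L 0) (hL'0 : 1 - α ≤ L' 0)
    (hL'anti : Antitone L')
    (hkey : ∀ r' r : ℝ, 0 ≤ r' → r' ≤ r → (1 + (r - r')) * L r ≤ L r')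
    (hLlip : ∀ r r' : ℝ, |L r - L r'| ≤ |r - r'|)
    (hLle : ∀ r : ℝ, r ≤ 1 → L r ≤ 1 - r)
    (hη : η ≤ (1 - α) * t / (1 + t) / 2)
    (hLL : ∀ r, |L' r - L r| ≤ η) :
    |sSup {r | r ∈ Set.Icc (0:ℝ) 1 ∧ 1 - α ≤ L' r} -
      sSup {r | r ∈ Set.Icc (0:ℝ) 1 ∧ 1 - α ≤ L r}| ≤ t := by
  obtain ⟨hα0, hα1⟩ := hα
  have h1t : (0:ℝ) < 1 + t := by linarith
  have hη' : 2 * η * (1 + t) ≤ (1 - α) * t := by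
    rw [div_div, le_div_iff₀ (by positivity)] at hη; linarith
  have hηt : 0 ≤ (1 - α) * t := by nlinarith
  set S := {r | r ∈ Set.Icc (0:ℝ) 1 ∧ 1 - α ≤ L r} with hSdef
  set S' := {r | r ∈ Set.Icc (0:ℝ) 1 ∧ 1 - α ≤ L' r} with hS'def
  set R := sSup S with hRdef
  set R' := sSup S' with hR'def
  have hS0 : (0:ℝ) ∈ S := ⟨⟨le_rfl, zero_le_one⟩, hL0⟩
  have hS'0 : (0:ℝ) ∈ S' := ⟨⟨le_rfl, zero_le_one⟩, hL'0⟩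
  have hSbdd : BddAbove S := ⟨1, fun r hr => hr.1.2⟩
  have hS'bdd : BddAbove S' := ⟨1, fun r hr => hr.1.2⟩
  have hR0 : 0 ≤ R := le_csSup hSbdd hS0
  have hR'0 : 0 ≤ R' := le_csSup hS'bdd hS'0
  have hRα : R ≤ α := by
    refine csSup_le ⟨0, hS0⟩ (fun r hr => ?_)
    have := hLle r hr.1.2
    have := hr.2
    linarith
  have hR1 : R ≤ 1 := by linarith
  -- L R ≥ 1 - α
  have hLR_ge : 1 - α ≤ L R := by
    refine le_of_forall_pos_le_add (fun ε hε => ?_)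
    obtain ⟨r, hrS, hrlt⟩ := exists_lt_of_lt_csSup ⟨0, hS0⟩ (by linarith : R - ε < R)
    have hrR : r ≤ R := le_csSup hSbdd hrS
    have habs : |r - R| < ε := by rw [abs_sub_comm, abs_of_nonneg (by linarith)]; linarith
    have h5 := hrS.2
    have h6 : L r - L R ≤ |r - R| := (le_abs_self _).trans (hLlip r R)
    linarith [habs.le]
  -- L R ≤ 1 - α
  have hLR_le : L R ≤ 1 - α := by
    by_contra hcon
    push_neg at hcon
    set t0 : ℝ := min (1 - R) (L R - (1 - α)) with ht0def
    have ht0 : 0 < t0 := lt_min (by linarith) (by linarith)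
    have hmem : R + t0 ∈ S := by
      refine ⟨⟨by linarith, by have := min_le_left (1 - R) (L R - (1 - α)); linarith⟩, ?_⟩
      have h2 := (abs_le.mp (hLlip (R + t0) R)).1
      have h3 : |R + t0 - R| = t0 := by rw [show R + t0 - R = t0 by ring, abs_of_pos ht0]
      rw [h3] at h2
      have := min_le_right (1 - R) (L R - (1 - α))
      linarith
    have := le_csSup hSbdd hmem
    linarith
  -- upper bound : R' ≤ R + t
  have hup : R' ≤ R + t := by
    refine csSup_le ⟨0, hS'0⟩ (fun r hr => ?_)
    by_contra hc
    push_neg at hc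
    have h1 : L' r ≤ L' (R + t) := hL'anti (by linarith)
    have h2 : (1 + t) * L (R + t) ≤ L R := by
      have := hkey R (R + t) hR0 (by linarith)
      rw [show R + t - R = t by ring] at this
      exact this
    have h3 : L' (R + t) ≤ L (R + t) + η := by
      have := (abs_le.mp (hLL (R + t))).2; linarith
    have h4 := hr.2
    have hη0 : 0 ≤ η := (abs_nonneg _).trans (hLL 0)
    nlinarith [mul_le_mul_of_nonneg_left hLR_ge h1t.le]
  -- lower bound : R - t ≤ R'
  have hlow : R - t ≤ R' := by
    rcases le_or_gt R t with h | h
    · linarith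
    · have hmem : R - t ∈ S' := by
        refine ⟨⟨by linarith, by linarith⟩, ?_⟩
        have h2 : (1 + t) * L R ≤ L (R - t) := by
          have := hkey (R - t) R (by linarith) (by linarith)
          rw [show R - (R - t) = t by ring] at this
          exact this
        have h3 : L (R - t) - η ≤ L' (R - t) := by
          have := (abs_le.mp (hLL (R - t))).1; linarith
        have hη0 : 0 ≤ η := (abs_nonneg _).trans (hLL 0)
        nlinarith [mul_le_mul_of_nonneg_left hLR_ge h1t.le]
      exact le_csSup hS'bdd hmem
  exact abs_le.mpr ⟨by linarith, by linarith⟩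

/-- continuity of the corrected acceptance probability function.  If the
posterior map is `C`-Lipschitz into `(P(Θ), W1)`, `ψ̃` is sup-norm continuous in `(x,π)` and
uniformly `β`-Lipschitz in `θ`, with credibility at least `1−α+F'`, then the correction
`R(x,π)` and the corrected acceptance function `ψ(x,π) = max(0, ψ̃(x,π) − R(x,π))` are
continuous in `(x,π)` (into `[0,1]` and into `(C(Θ,[0,1]), sup-norm)` respectively); in
particular `(x,π) ↦ ψ(x,π)(θ)` is jointly continuous for every `θ`. -/
theorem corrected_acceptance_function_continuous
    {d : ℕ} {X : Type*} [MetricSpace X]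
    (Θ : Set (EuclideanSpace ℝ (Fin d))) (hΘ : IsCompact Θ)
    (α β F' C : ℝ) (hα : α ∈ Set.Ioo (0:ℝ) 1) (hβ : 0 < β) (hF' : 0 < F') (hC : 0 < C)
    (Post : X → ProbabilityMeasure ↥Θ → ProbabilityMeasure ↥Θ)
    (hPostLip : ∀ (x x' : X) (π π' : ProbabilityMeasure ↥Θ),
      W1 (Post x π : Measure ↥Θ) (Post x' π' : Measure ↥Θ) ≤
        C * (dist x x' + W1 (π : Measure ↥Θ) (π' : Measure ↥Θ)))
    (ψt : X → ProbabilityMeasure ↥Θ → ↥Θ → ℝ)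
    (hψt01 : ∀ x π θ, ψt x π θ ∈ Set.Icc (0:ℝ) 1)
    (hψtLip : ∀ x π, LipschitzWith (Real.toNNReal β) (ψt x π))
    -- `ψ̃` is continuous into the sup-norm
    (hψtCont : ∀ (x : X) (π : ProbabilityMeasure ↥Θ), ∀ ε : ℝ, 0 < ε →
      ∃ δ : ℝ, 0 < δ ∧ ∀ (x' : X) (π' : ProbabilityMeasure ↥Θ),
        dist x' x + W1 (π' : Measure ↥Θ) (π : Measure ↥Θ) < δ →
        ∀ θ, |ψt x' π' θ - ψt x π θ| < ε)
    (hcred : ∀ (x : X) (π : ProbabilityMeasure ↥Θ),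
      1 - α + F' ≤ ∫ θ, ψt x π θ ∂(Post x π : Measure ↥Θ)) :
    -- `R` is continuous in `(x,π)`
    (∀ (x : X) (π : ProbabilityMeasure ↥Θ), ∀ ε : ℝ, 0 < ε →
      ∃ δ : ℝ, 0 < δ ∧ ∀ (x' : X) (π' : ProbabilityMeasure ↥Θ),
        dist x' x + W1 (π' : Measure ↥Θ) (π : Measure ↥Θ) < δ →
        |Rcorr Post ψt α x' π' - Rcorr Post ψt α x π| < ε) ∧
    -- `ψ` is continuous in `(x,π)` into the sup-norm
    (∀ (x : X) (π : ProbabilityMeasure ↥Θ), ∀ ε : ℝ, 0 < ε →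
      ∃ δ : ℝ, 0 < δ ∧ ∀ (x' : X) (π' : ProbabilityMeasure ↥Θ),
        dist x' x + W1 (π' : Measure ↥Θ) (π : Measure ↥Θ) < δ →
        ∀ θ, |max 0 (ψt x' π' θ - Rcorr Post ψt α x' π') -
          max 0 (ψt x π θ - Rcorr Post ψt α x π)| < ε) ∧
    -- in particular, pointwise joint continuity
    (∀ θ : ↥Θ, ∀ (x : X) (π : ProbabilityMeasure ↥Θ), ∀ ε : ℝ, 0 < ε →
      ∃ δ : ℝ, 0 < δ ∧ ∀ (x' : X) (π' : ProbabilityMeasure ↥Θ),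
        dist x' x + W1 (π' : Measure ↥Θ) (π : Measure ↥Θ) < δ →
        |max 0 (ψt x' π' θ - Rcorr Post ψt α x' π') -
          max 0 (ψt x π θ - Rcorr Post ψt α x π)| < ε) := by
  haveI : CompactSpace ↥Θ := isCompact_iff_compactSpace.mp hΘ
  obtain ⟨hα0, hα1⟩ := hα
  have hψc : ∀ x π, Continuous (ψt x π) := fun x π => (hψtLip x π).continuous
  have part1 : ∀ (x : X) (π : ProbabilityMeasure ↥Θ), ∀ ε : ℝ, 0 < ε →
      ∃ δ : ℝ, 0 < δ ∧ ∀ (x' : X) (π' : ProbabilityMeasure ↥Θ),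
        dist x' x + W1 (π' : Measure ↥Θ) (π : Measure ↥Θ) < δ →
        |Rcorr Post ψt α x' π' - Rcorr Post ψt α x π| < ε := by
    intro x π ε hε
    haveI hne : Nonempty ↥Θ := by
      by_contra h
      rw [not_nonempty_iff] at h
      exact IsProbabilityMeasure.ne_zero (π : Measure ↥Θ) (π : Measure ↥Θ).eq_zero_of_isEmpty
    set t := ε / 2 with htdef
    have ht : 0 < t := by positivity
    have h1α : 0 < 1 - α := by linarith
    set η₀ := (1 - α) * t / (1 + t) / 2 with hη₀def
    have hη₀ : 0 < η₀ := by positivity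
    set εψ := η₀ / 2 with hεψdef
    obtain ⟨δ₁, hδ₁, hδ₁p⟩ := hψtCont x π εψ (by positivity)
    set δ₂ := η₀ / (2 * (β * C)) with hδ₂def
    have hδ₂ : 0 < δ₂ := by positivity
    refine ⟨min δ₁ δ₂, lt_min hδ₁ hδ₂, fun x' π' hd => ?_⟩
    have hclose : ∀ θ, |ψt x' π' θ - ψt x π θ| ≤ εψ :=
      fun θ => (hδ₁p x' π' (lt_of_lt_of_le hd (min_le_left _ _)) θ).le
    -- the two level functions
    set L : ℝ → ℝ := fun r => ∫ θ, max 0 (ψt x π θ - r) ∂(Post x π : Measure ↥Θ) with hLdef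
    set L' : ℝ → ℝ := fun r => ∫ θ, max 0 (ψt x' π' θ - r) ∂(Post x' π' : Measure ↥Θ) with hL'def
    have hLL : ∀ r, |L' r - L r| ≤ η₀ := by
      intro r
      have hb := LL_bound (Post x π : Measure ↥Θ) (Post x' π' : Measure ↥Θ) hβ
        (hψtLip x π) (hψc x' π') hclose r
      have hW : W1 (Post x' π' : Measure ↥Θ) (Post x π : Measure ↥Θ) ≤
          C * (dist x' x + W1 (π' : Measure ↥Θ) (π : Measure ↥Θ)) := hPostLip x' x π' π
      have hd2 : dist x' x + W1 (π' : Measure ↥Θ) (π : Measure ↥Θ) ≤ δ₂ :=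
        hd.le.trans (min_le_right _ _)
      have hmul : β * W1 (Post x' π' : Measure ↥Θ) (Post x π : Measure ↥Θ) ≤ β * (C * δ₂) :=
        mul_le_mul_of_nonneg_left (hW.trans (mul_le_mul_of_nonneg_left hd2 hC.le)) hβ.le
      have hc2 : β * (C * δ₂) = η₀ / 2 := by
        rw [hδ₂def]; field_simp
      have : |L' r - L r| ≤ εψ + β * W1 (Post x' π' : Measure ↥Θ) (Post x π : Measure ↥Θ) := hb
      rw [hεψdef] at this
      linarith
    have hL0 : 1 - α ≤ L 0 := by
      have := hcred x π
      rw [hLdef]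
      simp only []
      rw [L_zero (Post x π : Measure ↥Θ) (fun θ => (hψt01 x π θ).1)]
      linarith
    have hL'0 : 1 - α ≤ L' 0 := by
      have := hcred x' π'
      rw [hL'def]
      simp only []
      rw [L_zero (Post x' π' : Measure ↥Θ) (fun θ => (hψt01 x' π' θ).1)]
      linarith
    have hcomp := R_compare ⟨hα0, hα1⟩ ht hL0 hL'0
      (L_anti (Post x' π' : Measure ↥Θ) (hψc x' π'))
      (fun r' r h0 hrr => L_key (Post x π : Measure ↥Θ) (hψc x π)
        (fun θ => (hψt01 x π θ).2) h0 hrr)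
      (fun r r' => L_lip (Post x π : Measure ↥Θ) (hψc x π) r r')
      (fun r hr => L_le (Post x π : Measure ↥Θ) (hψc x π) (fun θ => (hψt01 x π θ).2) hr)
      (le_of_eq hη₀def) hLL
    have heq : |Rcorr Post ψt α x' π' - Rcorr Post ψt α x π| ≤ t := by
      simpa [Rcorr, hLdef, hL'def] using hcomp
    linarith
  have part2 : ∀ (x : X) (π : ProbabilityMeasure ↥Θ), ∀ ε : ℝ, 0 < ε →
      ∃ δ : ℝ, 0 < δ ∧ ∀ (x' : X) (π' : ProbabilityMeasure ↥Θ),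
        dist x' x + W1 (π' : Measure ↥Θ) (π : Measure ↥Θ) < δ →
        ∀ θ, |max 0 (ψt x' π' θ - Rcorr Post ψt α x' π') -
          max 0 (ψt x π θ - Rcorr Post ψt α x π)| < ε := by
    intro x π ε hε
    obtain ⟨δR, hδR, hδRp⟩ := part1 x π (ε / 2) (by positivity)
    obtain ⟨δψ, hδψ, hδψp⟩ := hψtCont x π (ε / 2) (by positivity)
    refine ⟨min δR δψ, lt_min hδR hδψ, fun x' π' hd θ => ?_⟩
    have h1 := hδRp x' π' (lt_of_lt_of_le hd (min_le_left _ _))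
    have h2 := hδψp x' π' (lt_of_lt_of_le hd (min_le_right _ _)) θ
    set a := ψt x' π' θ - Rcorr Post ψt α x' π' with hadef
    set b := ψt x π θ - Rcorr Post ψt α x π with hbdef
    have hmax : |max 0 a - max 0 b| ≤ |a - b| := by
      rw [max_comm 0 a, max_comm 0 b]; exact abs_max_sub_max_le_abs a b 0
    have hab : |a - b| ≤ |ψt x' π' θ - ψt x π θ| + |Rcorr Post ψt α x' π' - Rcorr Post ψt α x π| := by
      rw [hadef, hbdef]
      calc |ψt x' π' θ - Rcorr Post ψt α x' π' - (ψt x π θ - Rcorr Post ψt α x π)|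
          = |(ψt x' π' θ - ψt x π θ) - (Rcorr Post ψt α x' π' - Rcorr Post ψt α x π)| := by
            congr 1; ring
        _ ≤ _ := abs_sub _ _
    linarith
  exact ⟨part1, part2, fun θ x π ε hε => by
    obtain ⟨δ, hδ, hp⟩ := part2 x π ε hε
    exact ⟨δ, hδ, fun x' π' hd => hp x' π' hd θ⟩⟩
end

section
/- For a, b > 0 let AGD(a,b) = { π ∈ P([0,1]) : π([0,a] ∪ [1−a,1]) ≤ 1−b }, where P([0,1]) is the set of Borel probability measures on [0,1] with the Wasserstein metric W1. Then for all a, b > 0 and all 0 < ε < ab/2, the ε-fattening of AGD(a,b) in (P([0,1]), W1) is contained in AGD(a/2, b − 2ε/a). -/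
open MeasureTheory

/-- `AGD a b`: the set of priors on `[0,1]` putting mass at most `1 − b` on
`[0,a] ∪ [1−a,1]`. -/
def AGD (a b : ℝ) : Set (ProbabilityMeasure ↥(Set.Icc (0:ℝ) 1)) :=
  {π | ((π : Measure ↥(Set.Icc (0:ℝ) 1))
      {θ : ↥(Set.Icc (0:ℝ) 1) | (θ : ℝ) ≤ a ∨ 1 - a ≤ (θ : ℝ)}).toReal ≤ 1 - b}

abbrev XX := ↥(Set.Icc (0:ℝ) 1)

lemma cont_integrable (f : XX → ℝ) (hf : Continuous f) (μ : Measure XX)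
    [IsFiniteMeasure μ] : Integrable f μ :=
  hf.integrable_of_hasCompactSupport
    (IsCompact.of_isClosed_subset CompactSpace.isCompact_univ (isClosed_tsupport f)
      (Set.subset_univ _))

lemma abs_diff_le_two (μ ν : ProbabilityMeasure XX) (f : XX → ℝ) (hf : LipschitzWith 1 f) :
    |(∫ t, f t ∂(μ : Measure XX)) - ∫ t, f t ∂(ν : Measure XX)| ≤ 2 := by
  set x0 : XX := ⟨0, by norm_num⟩
  set g : XX → ℝ := fun x => f x - f x0 with hg
  have hgl : LipschitzWith 1 g := by
    have := hf.sub (LipschitzWith.const (f x0))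
    simpa [g] using this
  have hbound : ∀ x : XX, ‖g x‖ ≤ 1 := by
    intro x
    have := hgl.dist_le_mul x x0
    simp only [NNReal.coe_one, one_mul] at this
    have hd : dist x x0 ≤ 1 := by
      rw [Subtype.dist_eq, Real.dist_eq]
      have h1 := x.2.1; have h2 := x.2.2
      simp only [x0]
      rw [abs_of_nonneg (by linarith)]
      linarith
    calc ‖g x‖ = dist (g x) (g x0) := by simp [g, Real.dist_eq, Real.norm_eq_abs]
    _ ≤ dist x x0 := this
    _ ≤ 1 := hd
  have hiμ : ∫ t, f t ∂(μ : Measure XX) = (∫ t, g t ∂(μ : Measure XX)) + f x0 := by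
    rw [integral_sub (cont_integrable f hf.continuous _) (integrable_const _)]
    simp
  have hiν : ∫ t, f t ∂(ν : Measure XX) = (∫ t, g t ∂(ν : Measure XX)) + f x0 := by
    rw [integral_sub (cont_integrable f hf.continuous _) (integrable_const _)]
    simp
  have h1 : ‖∫ t, g t ∂(μ : Measure XX)‖ ≤ 1 * ((μ : Measure XX) Set.univ).toReal :=
    norm_integral_le_of_norm_le_const (Filter.Eventually.of_forall hbound)
  have h2 : ‖∫ t, g t ∂(ν : Measure XX)‖ ≤ 1 * ((ν : Measure XX) Set.univ).toReal :=
    norm_integral_le_of_norm_le_const (Filter.Eventually.of_forall hbound)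
  simp only [measure_univ, ENNReal.toReal_one, mul_one, Real.norm_eq_abs] at h1 h2
  rw [hiμ, hiν]
  have := abs_sub_abs_le_abs_sub (∫ t, g t ∂(μ : Measure XX)) (∫ t, g t ∂(ν : Measure XX))
  have habs := abs_sub (∫ t, g t ∂(μ : Measure XX)) (∫ t, g t ∂(ν : Measure XX))
  calc |((∫ t, g t ∂(μ : Measure XX)) + f x0) - ((∫ t, g t ∂(ν : Measure XX)) + f x0)|
      = |(∫ t, g t ∂(μ : Measure XX)) - (∫ t, g t ∂(ν : Measure XX))| := by
        rw [add_sub_add_right_eq_sub]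
    _ ≤ |∫ t, g t ∂(μ : Measure XX)| + |∫ t, g t ∂(ν : Measure XX)| := abs_sub _ _
    _ ≤ 2 := by linarith

lemma le_W1 (μ ν : ProbabilityMeasure XX) (f : XX → ℝ) (hf : LipschitzWith 1 f) :
    (∫ t, f t ∂(μ : Measure XX)) - ∫ t, f t ∂(ν : Measure XX)
      ≤ W1 (μ : Measure XX) (ν : Measure XX) := by
  have hmem : |(∫ t, f t ∂(μ : Measure XX)) - ∫ t, f t ∂(ν : Measure XX)| ∈
      { r : ℝ | ∃ g : XX → ℝ, LipschitzWith 1 g ∧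
        r = |(∫ t, g t ∂(μ : Measure XX)) - ∫ t, g t ∂(ν : Measure XX)| } :=
    ⟨f, hf, rfl⟩
  have hbdd : BddAbove { r : ℝ | ∃ g : XX → ℝ, LipschitzWith 1 g ∧
      r = |(∫ t, g t ∂(μ : Measure XX)) - ∫ t, g t ∂(ν : Measure XX)| } := by
    refine ⟨2, fun r hr => ?_⟩
    obtain ⟨g, hg, rfl⟩ := hr
    exact abs_diff_le_two μ ν g hg
  exact le_trans (le_abs_self _) (le_csSup hbdd hmem)

/-- for `a, b > 0` and `0 < ε < ab/2`, the `ε`-fattening (in the Wasserstein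
metric) of `AGD(a,b)` is contained in `AGD(a/2, b − 2ε/a)`. -/
theorem AGD_fattening_containment
    (a b ε : ℝ) (ha : 0 < a) (hb : 0 < b) (hε : 0 < ε) (hε' : ε < a * b / 2)
    (μ : ProbabilityMeasure ↥(Set.Icc (0:ℝ) 1))
    (hμ : ∃ ν ∈ AGD a b,
      W1 (μ : Measure ↥(Set.Icc (0:ℝ) 1)) (ν : Measure ↥(Set.Icc (0:ℝ) 1)) < ε) :
    μ ∈ AGD (a / 2) (b - 2 * ε / a) := by
  obtain ⟨ν, hν, hW⟩ := hμ
  -- The 1-Lipschitz test function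
  set h : XX → ℝ := fun x => min (a/2) (max 0 (a - min (x:ℝ) (1 - (x:ℝ)))) with hh
  have hval : LipschitzWith 1 (fun x : XX => (x : ℝ)) := LipschitzWith.subtype_val _
  have hone : LipschitzWith 1 (fun x : XX => 1 - (x:ℝ)) := by
    simpa using (LipschitzWith.const (1:ℝ)).sub hval
  have hmin : LipschitzWith 1 (fun x : XX => min (x:ℝ) (1 - (x:ℝ))) := by
    simpa using hval.min hone
  have hsub : LipschitzWith 1 (fun x : XX => a - min (x:ℝ) (1 - (x:ℝ))) := by
    simpa using (LipschitzWith.const (a:ℝ)).sub hmin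
  have hmax : LipschitzWith 1 (fun x : XX => max 0 (a - min (x:ℝ) (1 - (x:ℝ)))) := by
    simpa using ((LipschitzWith.const (0:ℝ)).weaken zero_le_one).max hsub
  have hlip : LipschitzWith 1 h := by
    simpa [hh] using ((LipschitzWith.const (a/2)).weaken zero_le_one).min hmax
  set badA : Set XX := {θ : XX | (θ : ℝ) ≤ a ∨ 1 - a ≤ (θ : ℝ)} with hbadA
  set badA2 : Set XX := {θ : XX | (θ : ℝ) ≤ a/2 ∨ 1 - a/2 ≤ (θ : ℝ)} with hbadA2
  have hcoe : Measurable (fun θ : XX => (θ : ℝ)) := measurable_subtype_coe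
  have hmA : MeasurableSet badA := by
    rw [hbadA, Set.setOf_or]
    exact (measurableSet_le hcoe measurable_const).union
      (measurableSet_le measurable_const hcoe)
  have hmA2 : MeasurableSet badA2 := by
    rw [hbadA2, Set.setOf_or]
    exact (measurableSet_le hcoe measurable_const).union
      (measurableSet_le measurable_const hcoe)
  -- pointwise bounds
  have hub : ∀ x : XX, h x ≤ Set.indicator badA (fun _ => a/2) x := by
    intro x
    by_cases hx : x ∈ badA
    · rw [Set.indicator_of_mem hx]
      exact min_le_left _ _
    · rw [Set.indicator_of_notMem hx]
      simp only [hbadA, Set.mem_setOf_eq, not_or, not_le] at hx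
      have h1 : a < (x:ℝ) := hx.1
      have h2 : (x:ℝ) < 1 - a := hx.2
      have : a - min (x:ℝ) (1 - (x:ℝ)) ≤ 0 := by
        rcases min_cases (x:ℝ) (1 - (x:ℝ)) with ⟨heq, _⟩ | ⟨heq, _⟩ <;> rw [heq] <;> linarith
      have : max 0 (a - min (x:ℝ) (1 - (x:ℝ))) = 0 := max_eq_left this
      simp only [hh, this]
      exact le_of_eq (min_eq_right (by linarith))
  have hlb : ∀ x : XX, Set.indicator badA2 (fun _ => a/2) x ≤ h x := by
    intro x
    by_cases hx : x ∈ badA2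
    · rw [Set.indicator_of_mem hx]
      simp only [hbadA2, Set.mem_setOf_eq] at hx
      have hmin2 : min (x:ℝ) (1 - (x:ℝ)) ≤ a/2 := by
        rcases hx with hx | hx
        · exact le_trans (min_le_left _ _) hx
        · exact le_trans (min_le_right _ _) (by linarith)
      have : a/2 ≤ a - min (x:ℝ) (1 - (x:ℝ)) := by linarith
      simp only [hh]
      exact le_min le_rfl (le_max_of_le_right this)
    · rw [Set.indicator_of_notMem hx]
      simp only [hh]
      exact le_min (by linarith) (le_max_left _ _)
  -- integrals
  have hih : ∀ π : ProbabilityMeasure XX, Integrable h (π : Measure XX) :=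
    fun π => cont_integrable h hlip.continuous _
  have hint1 : (a/2) * (((μ : Measure XX)) badA2).toReal ≤ ∫ t, h t ∂(μ : Measure XX) := by
    have := integral_mono ((integrable_const (a/2)).indicator hmA2) (hih μ) hlb
    rwa [integral_indicator_const _ hmA2, smul_eq_mul, mul_comm] at this
  have hint2 : ∫ t, h t ∂(ν : Measure XX) ≤ (a/2) * (((ν : Measure XX)) badA).toReal := by
    have := integral_mono (hih ν) ((integrable_const (a/2)).indicator hmA) hub
    rwa [integral_indicator_const _ hmA, smul_eq_mul, mul_comm] at this
  have hW1 : (∫ t, h t ∂(μ : Measure XX)) - ∫ t, h t ∂(ν : Measure XX) < ε :=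
    lt_of_le_of_lt (le_W1 μ ν h hlip) hW
  have hνle : (((ν : Measure XX)) badA).toReal ≤ 1 - b := hν
  have hμnn : 0 ≤ (((μ : Measure XX)) badA2).toReal := ENNReal.toReal_nonneg
  show (((μ : Measure XX)) badA2).toReal ≤ 1 - (b - 2 * ε / a)
  have key : (a/2) * (((μ : Measure XX)) badA2).toReal ≤ (a/2) * (1 - b) + ε := by nlinarith
  have ha' : (0:ℝ) < a/2 := by linarith
  rw [show 1 - (b - 2*ε/a) = ((a/2)*(1-b)+ε)/(a/2) by field_simp; ring]
  rw [le_div_iff₀ ha']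
  nlinarith [key]
end
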